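/- arXiv:1711.06965 — 4 statements merged into one kernel-verified Lean document; each statement's English description precedes it below -/
import Mathlib

section
/- The Borel measure μ̄_e on Ω_e = (0,1)×(−1,1) with density (x,y) ↦ (1+xy)⁻² with respect to two-dimensional Lebesgue measure is T̄_e-invariant: μ̄_e(T̄_e⁻¹(E)) = μ̄_e(E) for every Borel set E ⊆ Ω_e. -/
open Set MeasureTheory

/-- `a_e(x)`: the unique even integer among `⌊1/x⌋`, `⌊1/x⌋ + 1`. -/
noncomputable def aE (x : ℝ) : ℤ := if Even ⌊1 / x⌋ then ⌊1 / x⌋ else ⌊1 / x⌋ + 1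

/-- `ε_e(x) = sign(1/x − a_e(x))`. -/
noncomputable def epsE (x : ℝ) : ℝ := if 0 < 1 / x - aE x then 1 else -1

/-- The even-continued-fraction Gauss map `T_e(x) = |1/x − a_e(x)|`. -/
noncomputable def TE (x : ℝ) : ℝ := |1 / x - aE x|

/-- The natural extension `T̄_e(x,y) = (T_e x, ε_e(x)/(a_e(x)+y))`. -/
noncomputable def barTE (p : ℝ × ℝ) : ℝ × ℝ :=
  (TE p.1, epsE p.1 / ((aE p.1 : ℝ) + p.2))

/-- The measure `μ̄_e` on `Ω_e = (0,1)×(−1,1)` with density `(1+xy)⁻²` with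
respect to the two-dimensional Lebesgue measure. -/
noncomputable def muBarE : Measure (ℝ × ℝ) :=
  ((volume : Measure (ℝ × ℝ)).restrict (Ioo (0 : ℝ) 1 ×ˢ Ioo (-1 : ℝ) 1)).withDensity
    (fun p => ENNReal.ofReal (((1 + p.1 * p.2) ^ 2)⁻¹))

open scoped ENNReal

namespace EvenCF

/-- the real value of the even digit on branch `n` -/
noncomputable def Aa (n : ℕ) : ℝ := 2 * n + 2

/-- sign of the branch -/
noncomputable def ee (b : Bool) : ℝ := if b then 1 else -1

lemma two_le_Aa (n : ℕ) : 2 ≤ Aa n := by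
  have : (0:ℝ) ≤ n := Nat.cast_nonneg n
  simp only [Aa]; linarith

lemma ee_sq (b : Bool) : ee b * ee b = 1 := by cases b <;> simp [ee]

lemma abs_ee (b : Bool) : |ee b| = 1 := by cases b <;> simp [ee]

/-- branch intervals in `x` -/
noncomputable def Ib : ℕ × Bool → Set ℝ
  | (n, true) => Ioo (1 / (Aa n + 1)) (1 / Aa n)
  | (n, false) => Ioo (1 / Aa n) (1 / (Aa n - 1))

/-- branch intervals in `y` -/
noncomputable def Jb : ℕ × Bool → Set ℝ
  | (n, true) => Ioo (1 / (Aa n + 1)) (1 / (Aa n - 1))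
  | (n, false) => Ioo (-(1 / (Aa n - 1))) (-(1 / (Aa n + 1)))

/-- the inverse branch map -/
noncomputable def phiB (i : ℕ × Bool) (q : ℝ × ℝ) : ℝ × ℝ :=
  (1 / (Aa i.1 + ee i.2 * q.1), ee i.2 / q.2 - Aa i.1)

lemma Ib_subset (i : ℕ × Bool) : Ib i ⊆ Ioo (0:ℝ) 1 := by
  obtain ⟨n, b⟩ := i
  have h2 := two_le_Aa n
  cases b <;>
  · intro x hx
    simp only [Ib] at hx
    obtain ⟨h1, h2'⟩ := hx
    constructor
    · refine lt_trans ?_ h1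
      positivity
    · refine lt_of_lt_of_le h2' ?_
      rw [div_le_one (by linarith)]
      linarith

/-- branch identification -/
lemma branch_id {n : ℕ} {b : Bool} {x : ℝ} (hx : x ∈ Ib (n, b)) :
    (aE x : ℝ) = Aa n ∧ epsE x = ee b ∧ TE x = ee b * (1 / x - Aa n) := by
  have h2 := two_le_Aa n
  cases b
  · -- b = false : 1/x ∈ (Aa n - 1, Aa n)
    simp only [Ib] at hx
    obtain ⟨h1, h2'⟩ := hx
    have hx0 : 0 < x := lt_trans (by positivity) h1
    have hl : Aa n - 1 < 1 / x := by
      rw [lt_div_iff₀ hx0]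
      calc (Aa n - 1) * x < (Aa n - 1) * (1 / (Aa n - 1)) := by
            apply mul_lt_mul_of_pos_left h2' (by linarith)
      _ = 1 := by rw [mul_one_div]; exact div_self (by linarith)
    have hu : 1 / x < Aa n := by
      rw [div_lt_iff₀ hx0]
      calc (1:ℝ) = Aa n * (1 / Aa n) := by
            rw [mul_one_div]; exact (div_self (by linarith)).symm
      _ < Aa n * x := by apply mul_lt_mul_of_pos_left h1 (by linarith)
    have hAeq : Aa n = ((2 * n + 2 : ℤ) : ℝ) := by push_cast [Aa]; ring
    have hfl : ⌊1 / x⌋ = 2 * n + 1 := by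
      rw [hAeq] at hl hu; push_cast at hl hu
      rw [Int.floor_eq_iff (z := 2 * (n:ℤ) + 1)]
      constructor <;> push_cast <;> linarith
    have hodd : ¬ Even ⌊1/x⌋ := by rw [hfl]; simp [Int.even_add_one, parity_simps]
    have haE : aE x = 2 * n + 2 := by rw [aE, if_neg hodd, hfl]; ring
    have haER : (aE x : ℝ) = Aa n := by rw [haE, hAeq]
    have hneg : 1 / x - (aE x : ℝ) < 0 := by rw [haER]; linarith
    refine ⟨haER, ?_, ?_⟩
    · rw [epsE, if_neg (by linarith), ee]; simp
    · rw [TE, abs_of_neg hneg, haER, ee]; simp only [Bool.false_eq_true, if_false]; ring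
  · -- b = true : 1/x ∈ (Aa n, Aa n + 1)
    simp only [Ib] at hx
    obtain ⟨h1, h2'⟩ := hx
    have hx0 : 0 < x := lt_trans (by positivity) h1
    have hl : Aa n < 1 / x := by
      rw [lt_div_iff₀ hx0]
      calc Aa n * x < Aa n * (1 / Aa n) := by
            apply mul_lt_mul_of_pos_left h2' (by linarith)
      _ = 1 := by rw [mul_one_div]; exact div_self (by linarith)
    have hu : 1 / x < Aa n + 1 := by
      rw [div_lt_iff₀ hx0]
      calc (1:ℝ) = (Aa n + 1) * (1 / (Aa n + 1)) := by
            rw [mul_one_div]; exact (div_self (by linarith)).symm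
      _ < (Aa n + 1) * x := by apply mul_lt_mul_of_pos_left h1 (by linarith)
    have hAeq : Aa n = ((2 * n + 2 : ℤ) : ℝ) := by push_cast [Aa]; ring
    have hfl : ⌊1 / x⌋ = 2 * n + 2 := by
      rw [hAeq] at hl hu; push_cast at hl hu
      rw [Int.floor_eq_iff (z := 2 * (n:ℤ) + 2)]
      constructor <;> push_cast <;> linarith
    have heven : Even ⌊1/x⌋ := by rw [hfl]; exact ⟨(n:ℤ)+1, by ring⟩
    have haE : aE x = 2 * n + 2 := by rw [aE, if_pos heven, hfl]
    have haER : (aE x : ℝ) = Aa n := by rw [haE, hAeq]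
    have hpos : 0 < 1 / x - (aE x : ℝ) := by rw [haER]; linarith
    refine ⟨haER, ?_, ?_⟩
    · rw [epsE, if_pos hpos, ee]; simp
    · rw [TE, abs_of_pos hpos, haER, ee]; simp


lemma ee_true : ee true = 1 := by norm_num [ee]
lemma ee_false : ee false = -1 := by norm_num [ee]
lemma ee_ne_zero (b : Bool) : ee b ≠ 0 := by cases b <;> norm_num [ee]

lemma inv_Ioo {c d x : ℝ} (hc : 0 < c) (hx : x ∈ Ioo c d) : 1/x ∈ Ioo (1/d) (1/c) :=
  ⟨one_div_lt_one_div_of_lt (lt_trans hc hx.1) hx.2, one_div_lt_one_div_of_lt hc hx.1⟩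

lemma inv_Ioo' {c d x : ℝ} (hc : 0 < c) (hd : 0 < d) (hx : x ∈ Ioo (1/d) (1/c)) :
    1/x ∈ Ioo c d := by
  have := inv_Ioo (show (0:ℝ) < 1/d by positivity) hx
  rwa [one_div_one_div, one_div_one_div] at this

lemma Jb_ne_zero {i : ℕ × Bool} {y : ℝ} (hy : y ∈ Jb i) : y ≠ 0 := by
  obtain ⟨n, b⟩ := i
  have h2 := two_le_Aa n
  have hpos : (0:ℝ) < 1/(Aa n + 1) := by positivity
  cases b <;> simp only [Jb] at hy
  · have : y < -(1/(Aa n + 1)) := hy.2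
    linarith
  · have : 1/(Aa n + 1) < y := hy.1
    linarith

lemma mem_phiB {i : ℕ × Bool} {q : ℝ × ℝ} (hq : q ∈ Ioo (0:ℝ) 1 ×ˢ Jb i) :
    phiB i q ∈ Ib i ×ˢ Ioo (-1:ℝ) 1 := by
  obtain ⟨n, b⟩ := i
  have h2 := two_le_Aa n
  obtain ⟨hq1, hq2⟩ := hq
  cases b
  · -- b = false
    simp only [Jb] at hq2
    simp only [phiB, ee_false]
    constructor
    · -- x component : 1/(Aa n + (-1)*q.1) ∈ Ib (n,false)
      have hmem : Aa n + (-1) * q.1 ∈ Ioo (Aa n - 1) (Aa n) :=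
        ⟨by simp only [mem_Ioo] at hq1; linarith [hq1.2], by simp only [mem_Ioo] at hq1; linarith [hq1.1]⟩
      exact inv_Ioo (by linarith) hmem
    · -- y component
      have hz : -q.2 ∈ Ioo (1/(Aa n + 1)) (1/(Aa n - 1)) :=
        ⟨by linarith [hq2.2], by linarith [hq2.1]⟩
      have h3 := inv_Ioo' (by linarith) (by linarith) hz
      have heq : (-1) / q.2 = 1 / (-q.2) := by rw [neg_div, div_neg]
      rw [mem_Ioo, heq]
      exact ⟨by linarith [h3.1], by linarith [h3.2]⟩
  · -- b = true
    simp only [Jb] at hq2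
    simp only [phiB, ee_true]
    constructor
    · have hmem : Aa n + 1 * q.1 ∈ Ioo (Aa n) (Aa n + 1) :=
        ⟨by simp only [mem_Ioo] at hq1; linarith [hq1.1], by simp only [mem_Ioo] at hq1; linarith [hq1.2]⟩
      exact inv_Ioo (by linarith) hmem
    · have h3 := inv_Ioo' (by linarith) (by linarith) hq2
      rw [mem_Ioo]
      exact ⟨by linarith [h3.1], by linarith [h3.2]⟩

lemma mem_psi {i : ℕ × Bool} {p : ℝ × ℝ} (hp : p ∈ Ib i ×ˢ Ioo (-1:ℝ) 1) :
    (ee i.2 * (1/p.1 - Aa i.1), ee i.2 / (Aa i.1 + p.2)) ∈ Ioo (0:ℝ) 1 ×ˢ Jb i := by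
  obtain ⟨n, b⟩ := i
  have h2 := two_le_Aa n
  obtain ⟨hp1, hp2⟩ := hp
  simp only [mem_Ioo] at hp2
  cases b
  · -- b = false : p.1 ∈ (1/a, 1/(a-1))
    simp only [Ib] at hp1
    simp only [ee_false]
    have hinv : 1/p.1 ∈ Ioo (Aa n - 1) (Aa n) := inv_Ioo' (by linarith) (by linarith) hp1
    refine ⟨⟨by linarith [hinv.2], by linarith [hinv.1]⟩, ?_⟩
    have hw : Aa n + p.2 ∈ Ioo (Aa n - 1) (Aa n + 1) := ⟨by linarith, by linarith⟩
    have h3 := inv_Ioo (by linarith) hw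
    have heq : (-1) / (Aa n + p.2) = -(1/(Aa n + p.2)) := by rw [neg_div]
    simp only [Jb, heq, mem_Ioo]
    exact ⟨by linarith [h3.2], by linarith [h3.1]⟩
  · -- b = true : p.1 ∈ (1/(a+1), 1/a)
    simp only [Ib] at hp1
    simp only [ee_true]
    have hinv : 1/p.1 ∈ Ioo (Aa n) (Aa n + 1) := inv_Ioo' (by linarith) (by linarith) hp1
    refine ⟨⟨by linarith [hinv.1], by linarith [hinv.2]⟩, ?_⟩
    have hw : Aa n + p.2 ∈ Ioo (Aa n - 1) (Aa n + 1) := ⟨by linarith, by linarith⟩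
    have h3 := inv_Ioo (by linarith) hw
    simp only [Jb, mem_Ioo, one_div] at h3 ⊢
    exact ⟨h3.1, h3.2⟩

lemma phi_psi {i : ℕ × Bool} {p : ℝ × ℝ} (hp : p ∈ Ib i ×ˢ Ioo (-1:ℝ) 1) :
    phiB i (ee i.2 * (1/p.1 - Aa i.1), ee i.2 / (Aa i.1 + p.2)) = p := by
  obtain ⟨n, b⟩ := i
  have h2 := two_le_Aa n
  obtain ⟨hp1, hp2⟩ := hp
  simp only [mem_Ioo] at hp2
  have hx0 : 0 < p.1 := (Ib_subset (n, b) hp1).1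
  have hw : 0 < Aa n + p.2 := by linarith [hp2.1]
  have hee := ee_sq b
  have heene := ee_ne_zero b
  simp only [phiB]
  have hx : Aa n + ee b * (ee b * (1/p.1 - Aa n)) = 1/p.1 := by
    have h' : ee b * (ee b * (1/p.1 - Aa n)) = (ee b * ee b) * (1/p.1 - Aa n) := by ring
    rw [h', hee]; ring
  have hy : ee b / (ee b / (Aa n + p.2)) - Aa n = p.2 := by
    rw [div_div_eq_mul_div, mul_comm, mul_div_assoc, div_self heene, mul_one]; ring
  rw [hx, hy, one_div_one_div]

lemma barTE_phiB {i : ℕ × Bool} {q : ℝ × ℝ} (hq : q ∈ Ioo (0:ℝ) 1 ×ˢ Jb i) :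
    barTE (phiB i q) = q := by
  have hmem := mem_phiB hq
  obtain ⟨n, b⟩ := i
  have h2 := two_le_Aa n
  obtain ⟨hid1, hid2, hid3⟩ := branch_id hmem.1
  obtain ⟨hq1, hq2⟩ := hq
  simp only [mem_Ioo] at hq1
  have hq2ne : q.2 ≠ 0 := Jb_ne_zero hq2
  have hee := ee_sq b
  have heene := ee_ne_zero b
  have hden : Aa n + ee b * q.1 ≠ 0 := by
    cases b <;> [rw [ee_false]; rw [ee_true]] <;> nlinarith [hq1.1, hq1.2]
  simp only [barTE, hid2, hid3, hid1]
  simp only [phiB]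
  have h1 : 1 / (1 / (Aa n + ee b * q.1)) = Aa n + ee b * q.1 := one_div_one_div _
  rw [h1, Prod.ext_iff]
  constructor
  · show ee b * (Aa n + ee b * q.1 - Aa n) = q.1
    calc ee b * (Aa n + ee b * q.1 - Aa n) = (ee b * ee b) * q.1 := by ring
    _ = q.1 := by rw [hee]; ring
  · show ee b / (Aa n + (ee b / q.2 - Aa n)) = q.2
    have h' : Aa n + (ee b / q.2 - Aa n) = ee b / q.2 := by ring
    rw [h', div_div_eq_mul_div, mul_comm, mul_div_assoc, div_self heene, mul_one]

/-- the density -/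
noncomputable def dens (p : ℝ × ℝ) : ℝ≥0∞ := ENNReal.ofReal (((1 + p.1 * p.2) ^ 2)⁻¹)

lemma Jb_subset (i : ℕ × Bool) : Jb i ⊆ Ioo (-1:ℝ) 1 := by
  obtain ⟨n, b⟩ := i
  have h2 := two_le_Aa n
  have h1 : 1/(Aa n - 1) ≤ 1 := by
    rw [div_le_one (by linarith)]; linarith
  have h0 : (0:ℝ) < 1/(Aa n + 1) := by positivity
  cases b <;> intro y hy <;> simp only [Jb, mem_Ioo] at hy ⊢ <;>
    exact ⟨by linarith [hy.1], by linarith [hy.2]⟩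

lemma branch_id' {i : ℕ × Bool} {x : ℝ} (hx : x ∈ Ib i) :
    (aE x : ℝ) = Aa i.1 ∧ epsE x = ee i.2 ∧ TE x = ee i.2 * (1 / x - Aa i.1) := by
  obtain ⟨n, b⟩ := i; exact branch_id hx

lemma branch_preimage (i : ℕ × Bool) (E : Set (ℝ × ℝ)) :
    barTE ⁻¹' E ∩ (Ib i ×ˢ Ioo (-1:ℝ) 1) = phiB i '' (E ∩ (Ioo (0:ℝ) 1 ×ˢ Jb i)) := by
  ext p
  simp only [mem_inter_iff, mem_preimage, mem_image]
  constructor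
  · rintro ⟨hE, hp⟩
    obtain ⟨hid1, hid2, hid3⟩ := branch_id' hp.1
    have hbar : barTE p = (ee i.2 * (1/p.1 - Aa i.1), ee i.2 / (Aa i.1 + p.2)) := by
      simp only [barTE, hid1, hid2, hid3]
    exact ⟨_, ⟨by rw [← hbar]; exact hE, mem_psi hp⟩, phi_psi hp⟩
  · rintro ⟨q, ⟨hqE, hq⟩, rfl⟩
    exact ⟨by rw [barTE_phiB hq]; exact hqE, mem_phiB hq⟩

lemma phiB_injOn (i : ℕ × Bool) : InjOn (phiB i) (Ioo (0:ℝ) 1 ×ˢ Jb i) :=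
  fun _ h1 _ h2 h => by rw [← barTE_phiB h1, h, barTE_phiB h2]

lemma den_ge_one {i : ℕ × Bool} {t : ℝ} (ht : t ∈ Ioo (0:ℝ) 1) :
    1 ≤ Aa i.1 + ee i.2 * t := by
  obtain ⟨n, b⟩ := i
  have h2 := two_le_Aa n
  obtain ⟨ht1, ht2⟩ := ht
  cases b <;> [rw [ee_false]; rw [ee_true]] <;> nlinarith

lemma det_prodMap_aux (c k : ℝ) :
    (((1 : ℝ →L[ℝ] ℝ).smulRight c).prodMap ((1 : ℝ →L[ℝ] ℝ).smulRight k)).det = c * k := by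
  have h : ((((1 : ℝ →L[ℝ] ℝ).smulRight c).prodMap ((1 : ℝ →L[ℝ] ℝ).smulRight k)) :
      ℝ × ℝ →ₗ[ℝ] ℝ × ℝ) =
      (((1 : ℝ →L[ℝ] ℝ).smulRight c : ℝ →ₗ[ℝ] ℝ).prodMap
        ((1 : ℝ →L[ℝ] ℝ).smulRight k : ℝ →ₗ[ℝ] ℝ)) := rfl
  rw [ContinuousLinearMap.det, h, ← LinearMap.det_toMatrix (Module.Basis.finTwoProd ℝ)]
  rw [Matrix.det_fin_two]
  simp [LinearMap.toMatrix_apply, Module.Basis.finTwoProd]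

/-- the derivative of `phiB` -/
noncomputable def DphiB (i : ℕ × Bool) (q : ℝ × ℝ) : ℝ × ℝ →L[ℝ] ℝ × ℝ :=
  ((1 : ℝ →L[ℝ] ℝ).smulRight (-(ee i.2) / (Aa i.1 + ee i.2 * q.1) ^ 2)).prodMap
    ((1 : ℝ →L[ℝ] ℝ).smulRight (-(ee i.2) / q.2 ^ 2))

lemma hasFDerivAt_phiB (i : ℕ × Bool) {q : ℝ × ℝ}
    (h1 : Aa i.1 + ee i.2 * q.1 ≠ 0) (h2 : q.2 ≠ 0) :
    HasFDerivAt (phiB i) (DphiB i q) q := by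
  have hf : HasDerivAt (fun t : ℝ => 1 / (Aa i.1 + ee i.2 * t))
      (-(ee i.2) / (Aa i.1 + ee i.2 * q.1) ^ 2) q.1 := by
    have h0 : HasDerivAt (fun t : ℝ => Aa i.1 + ee i.2 * t) (ee i.2) q.1 := by
      simpa using ((hasDerivAt_id q.1).const_mul (ee i.2)).const_add (Aa i.1)
    have := h0.inv h1
    simp only [one_div]
    exact this
  have hg : HasDerivAt (fun y : ℝ => ee i.2 / y - Aa i.1) (-(ee i.2) / q.2 ^ 2) q.2 := by
    have := (hasDerivAt_inv h2).const_mul (ee i.2)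
    have h' := this.sub_const (Aa i.1)
    simp only [div_eq_mul_inv]
    refine h'.congr_deriv ?_
    ring
  have H := HasFDerivAt.prodMap (p := q) hf.hasFDerivAt hg.hasFDerivAt
  have hfun : phiB i = Prod.map (fun t : ℝ => 1 / (Aa i.1 + ee i.2 * t))
      (fun y : ℝ => ee i.2 / y - Aa i.1) := by
    funext p; rfl
  rw [DphiB, hfun]
  exact H

lemma dens_transform {i : ℕ × Bool} {q : ℝ × ℝ} (hq : q ∈ Ioo (0:ℝ) 1 ×ˢ Jb i) :
    ENNReal.ofReal |(DphiB i q).det| * dens (phiB i q) = dens q := by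
  obtain ⟨hq1, hq2⟩ := hq
  have h2 := two_le_Aa i.1
  have hy : q.2 ≠ 0 := Jb_ne_zero hq2
  have hyI := Jb_subset i hq2
  have hw1 : 1 ≤ Aa i.1 + ee i.2 * q.1 := den_ge_one hq1
  set w := Aa i.1 + ee i.2 * q.1 with hw
  have hw0 : w ≠ 0 := by linarith
  have hee := ee_sq i.2
  have hty : 0 < 1 + q.1 * q.2 := by
    simp only [mem_Ioo] at hq1 hyI
    nlinarith [hq1.1, hq1.2, hyI.1, hyI.2]
  -- determinant
  have hdet : (DphiB i q).det = (w ^ 2 * q.2 ^ 2)⁻¹ := by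
    rw [DphiB, det_prodMap_aux, ← hw]
    rw [div_mul_div_comm]
    have h1 : -ee i.2 * -ee i.2 = 1 := by rw [neg_mul_neg, hee]
    rw [h1, one_div]
  have hdetpos : (0:ℝ) < (w ^ 2 * q.2 ^ 2)⁻¹ := by positivity
  rw [hdet, abs_of_pos hdetpos]
  -- dens of image
  have himg : dens (phiB i q) =
      ENNReal.ofReal (((1 + (1 / w) * (ee i.2 / q.2 - Aa i.1)) ^ 2)⁻¹) := rfl
  rw [himg, dens, ← ENNReal.ofReal_mul (le_of_lt hdetpos)]
  congr 1
  -- real identity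
  have key : (1 + (1 / w) * (ee i.2 / q.2 - Aa i.1)) * (w * q.2) = ee i.2 * (1 + q.1 * q.2) := by
    have hw0' : Aa i.1 + ee i.2 * q.1 ≠ 0 := hw0
    rw [hw]; field_simp; ring
  have hsq : (1 + (1 / w) * (ee i.2 / q.2 - Aa i.1)) ^ 2 * (w ^ 2 * q.2 ^ 2)
      = (1 + q.1 * q.2) ^ 2 := by
    calc (1 + (1 / w) * (ee i.2 / q.2 - Aa i.1)) ^ 2 * (w ^ 2 * q.2 ^ 2)
        = ((1 + (1 / w) * (ee i.2 / q.2 - Aa i.1)) * (w * q.2)) ^ 2 := by ring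
      _ = (ee i.2 * (1 + q.1 * q.2)) ^ 2 := by rw [key]
      _ = (ee i.2 * ee i.2) * (1 + q.1 * q.2) ^ 2 := by ring
      _ = (1 + q.1 * q.2) ^ 2 := by rw [hee, one_mul]
  rw [← hsq]
  simp only [mul_inv]
  ring

lemma branch_lintegral (i : ℕ × Bool) {s : Set (ℝ × ℝ)} (hs : MeasurableSet s)
    (hsub : s ⊆ Ioo (0:ℝ) 1 ×ˢ Jb i) :
    ∫⁻ p in phiB i '' s, dens p = ∫⁻ p in s, dens p := by
  rw [lintegral_image_eq_lintegral_abs_det_fderiv_mul volume hs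
    (fun q hq => ((hasFDerivAt_phiB i
      (by have := den_ge_one (i := i) (hsub hq).1; linarith)
      (Jb_ne_zero (hsub hq).2)).hasFDerivWithinAt))
    ((phiB_injOn i).mono hsub) dens]
  exact setLIntegral_congr_fun hs (fun q hq => dens_transform (hsub hq))

lemma measurable_barTE : Measurable barTE := by
  have hinv : Measurable fun x : ℝ => 1 / x := by
    simpa [one_div] using (measurable_inv : Measurable fun x : ℝ => x⁻¹)
  have hfloor : Measurable fun x : ℝ => ⌊1 / x⌋ := hinv.floor
  have hcast : Measurable fun z : ℤ => (z : ℝ) := measurable_of_countable _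
  have haE : Measurable fun x : ℝ => aE x := by
    unfold aE
    exact Measurable.ite (hfloor (MeasurableSet.of_discrete (s := {z : ℤ | Even z})))
      hfloor (hfloor.add measurable_const)
  have haER : Measurable fun x : ℝ => ((aE x : ℤ) : ℝ) := hcast.comp haE
  have hsub : Measurable fun x : ℝ => 1 / x - (aE x : ℝ) := hinv.sub haER
  have hepsE : Measurable epsE := by
    unfold epsE
    exact Measurable.ite (hsub measurableSet_Ioi) measurable_const measurable_const
  have hTE : Measurable TE := hsub.abs
  apply Measurable.prod
  · exact hTE.comp measurable_fst
  · exact ((hepsE.comp measurable_fst)).div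
      ((haER.comp measurable_fst).add measurable_snd)

lemma Ib_meas (i : ℕ × Bool) : MeasurableSet (Ib i) := by
  obtain ⟨n, b⟩ := i; cases b <;> exact measurableSet_Ioo

lemma Jb_meas (i : ℕ × Bool) : MeasurableSet (Jb i) := by
  obtain ⟨n, b⟩ := i; cases b <;> exact measurableSet_Ioo

/-- reindexing of `Ib` -/
noncomputable def mI (i : ℕ × Bool) : ℕ := cond i.2 (2 * i.1 + 2) (2 * i.1 + 1)

lemma Ib_eq (i : ℕ × Bool) : Ib i = Ioo (1 / ((mI i : ℝ) + 1)) (1 / (mI i : ℝ)) := by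
  obtain ⟨n, b⟩ := i
  cases b <;> simp only [Ib, mI, Aa, cond] <;> push_cast <;> norm_num <;> ring_nf

lemma mI_inj : Function.Injective mI := by
  rintro ⟨n, b⟩ ⟨m, c⟩ h
  simp only [mI] at h
  cases b <;> cases c <;> simp_all [cond] <;> omega

lemma Ioo_inv_disjoint {m m' : ℕ} (h : m < m') :
    Disjoint (Ioo (1 / ((m:ℝ) + 1)) (1 / (m:ℝ))) (Ioo (1 / ((m':ℝ) + 1)) (1 / (m':ℝ))) := by
  rw [Set.disjoint_left]
  intro x hx hx'
  have h1 : 1 / ((m':ℝ)) ≤ 1 / ((m:ℝ) + 1) := by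
    apply one_div_le_one_div_of_le
    · positivity
    · exact_mod_cast h
  linarith [hx.1, hx'.2]

lemma Ib_disjoint : Pairwise (Function.onFun Disjoint Ib) := by
  intro i j hij
  have hmn : mI i ≠ mI j := fun h => hij (mI_inj h)
  rw [Function.onFun, Ib_eq, Ib_eq]
  rcases lt_or_gt_of_ne hmn with h | h
  · exact Ioo_inv_disjoint h
  · exact (Ioo_inv_disjoint h).symm

lemma Jb_pos {n : ℕ} {y : ℝ} (hy : y ∈ Jb (n, true)) : 0 < y := by
  have h2 := two_le_Aa n
  have : (0:ℝ) < 1 / (Aa n + 1) := by positivity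
  have := hy.1
  linarith

lemma Jb_neg {n : ℕ} {y : ℝ} (hy : y ∈ Jb (n, false)) : y < 0 := by
  have h2 := two_le_Aa n
  have : (0:ℝ) < 1 / (Aa n + 1) := by positivity
  have := hy.2
  linarith

lemma Jb_disjoint_tt {n m : ℕ} (h : n < m) : Disjoint (Jb (n, true)) (Jb (m, true)) := by
  rw [Set.disjoint_left]
  intro y hy hy'
  simp only [Jb] at hy hy'
  have h2n := two_le_Aa n
  have h2m := two_le_Aa m
  have hle : 1 / (Aa m - 1) ≤ 1 / (Aa n + 1) := by
    apply one_div_le_one_div_of_le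
    · linarith
    · simp only [Aa]; push_cast
      have hnm : (n:ℝ) + 1 ≤ m := by exact_mod_cast h
      linarith
  linarith [hy.1, hy'.2]

lemma Jb_disjoint_ff {n m : ℕ} (h : n < m) : Disjoint (Jb (n, false)) (Jb (m, false)) := by
  rw [Set.disjoint_left]
  intro y hy hy'
  simp only [Jb] at hy hy'
  have h2n := two_le_Aa n
  have h2m := two_le_Aa m
  have hle : 1 / (Aa m - 1) ≤ 1 / (Aa n + 1) := by
    apply one_div_le_one_div_of_le
    · linarith
    · simp only [Aa]; push_cast
      have hnm : (n:ℝ) + 1 ≤ m := by exact_mod_cast h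
      linarith
  linarith [hy.2, hy'.1]

lemma Jb_disjoint : Pairwise (Function.onFun Disjoint Jb) := by
  rintro ⟨n, b⟩ ⟨m, c⟩ hij
  rw [Function.onFun]
  cases b <;> cases c
  · rcases lt_trichotomy n m with h | h | h
    · exact Jb_disjoint_ff h
    · exact absurd (by rw [h]) hij
    · exact (Jb_disjoint_ff h).symm
  · rw [Set.disjoint_left]; intro y hy hy'; linarith [Jb_neg hy, Jb_pos hy']
  · rw [Set.disjoint_left]; intro y hy hy'; linarith [Jb_pos hy, Jb_neg hy']
  · rcases lt_trichotomy n m with h | h | h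
    · exact Jb_disjoint_tt h
    · exact absurd (by rw [h]) hij
    · exact (Jb_disjoint_tt h).symm

lemma Ib_cover {x : ℝ} (hx : x ∈ Ioo (0:ℝ) 1) (hne : ∀ m : ℕ, x ≠ 1 / (m:ℝ)) :
    ∃ i, x ∈ Ib i := by
  obtain ⟨hx0, hx1⟩ := hx
  have h1x : 1 < 1 / x := by rw [lt_div_iff₀ hx0]; linarith
  have hfl1 : 1 ≤ ⌊1/x⌋ := by
    rw [Int.le_floor]; exact_mod_cast le_of_lt h1x
  set k : ℕ := ⌊1/x⌋.toNat with hk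
  have hkz : (k : ℤ) = ⌊1/x⌋ := Int.toNat_of_nonneg (by linarith)
  have hk1 : 1 ≤ k := by omega
  have hkle : (k:ℝ) ≤ 1/x := by
    rw [show ((k:ℝ)) = ((k:ℤ):ℝ) by push_cast; ring, hkz]; exact Int.floor_le _
  have hklt : 1/x < (k:ℝ) + 1 := by
    have := Int.lt_floor_add_one (1/x)
    rw [← hkz] at this; push_cast at this; linarith
  have hne' : (k:ℝ) ≠ 1/x := by
    intro h
    exact hne k (by rw [h, one_div_one_div])
  have hmem : 1/x ∈ Ioo ((k:ℝ)) ((k:ℝ)+1) := ⟨lt_of_le_of_ne hkle hne', hklt⟩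
  have hxmem : x ∈ Ioo (1/((k:ℝ)+1)) (1/(k:ℝ)) := by
    have := inv_Ioo (by exact_mod_cast hk1 : (0:ℝ) < (k:ℝ)) hmem
    rwa [one_div_one_div] at this
  rcases Nat.even_or_odd k with ⟨t, ht⟩ | ⟨t, ht⟩
  · -- k = t + t, t ≥ 1, use (t-1, true)
    have ht1 : 1 ≤ t := by omega
    refine ⟨(t-1, true), ?_⟩
    have hA : Aa (t-1) = (k:ℝ) := by
      simp only [Aa]; rw [ht]; push_cast [Nat.cast_sub ht1]; ring
    simp only [Ib, hA]
    exact hxmem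
  · -- k = 2t+1, use (t, false)
    refine ⟨(t, false), ?_⟩
    have hA : Aa t = (k:ℝ) + 1 := by
      simp only [Aa]; rw [ht]; push_cast; ring
    have hA' : Aa t - 1 = (k:ℝ) := by rw [hA]; ring
    simp only [Ib]
    rw [hA', hA]
    exact hxmem

lemma Jb_cover_pos {y : ℝ} (hy : y ∈ Ioo (0:ℝ) 1) (hne : ∀ m : ℕ, y ≠ 1 / (m:ℝ)) :
    ∃ n, y ∈ Jb (n, true) := by
  obtain ⟨hy0, hy1⟩ := hy
  have h1y : 1 < 1 / y := by rw [lt_div_iff₀ hy0]; linarith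
  have hfl1 : 1 ≤ ⌊1/y⌋ := by
    rw [Int.le_floor]; exact_mod_cast le_of_lt h1y
  set k : ℕ := ⌊1/y⌋.toNat with hk
  have hkz : (k : ℤ) = ⌊1/y⌋ := Int.toNat_of_nonneg (by linarith)
  have hk1 : 1 ≤ k := by omega
  have hkle : (k:ℝ) ≤ 1/y := by
    rw [show ((k:ℝ)) = ((k:ℤ):ℝ) by push_cast; ring, hkz]; exact Int.floor_le _
  have hklt : 1/y < (k:ℝ) + 1 := by
    have := Int.lt_floor_add_one (1/y)
    rw [← hkz] at this; push_cast at this; linarith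
  rcases Nat.even_or_odd k with ⟨t, ht⟩ | ⟨t, ht⟩
  · -- k = t + t even, t ≥ 1, n = t - 1 : need 2t-1 < 1/y < 2t+1
    have ht1 : 1 ≤ t := by omega
    refine ⟨t - 1, ?_⟩
    have hA1 : Aa (t-1) + 1 = 2*(t:ℝ) + 1 := by
      simp only [Aa]; push_cast [Nat.cast_sub ht1]; ring
    have hA2 : Aa (t-1) - 1 = 2*(t:ℝ) - 1 := by
      simp only [Aa]; push_cast [Nat.cast_sub ht1]; ring
    have hkr : (k:ℝ) = 2*(t:ℝ) := by rw [ht]; push_cast; ring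
    have hmem : 1/y ∈ Ioo (2*(t:ℝ) - 1) (2*(t:ℝ) + 1) :=
      ⟨by linarith [hkle, hkr], by linarith [hklt, hkr]⟩
    have htr : (1:ℝ) ≤ t := by exact_mod_cast ht1
    have := inv_Ioo (by linarith : (0:ℝ) < 2*(t:ℝ) - 1) hmem
    rw [one_div_one_div] at this
    simp only [Jb, hA1, hA2]
    exact ⟨this.1, this.2⟩
  · -- k = 2t+1 odd, n = t : need 2t+1 < 1/y < 2t+3
    refine ⟨t, ?_⟩
    have hne' : (k:ℝ) ≠ 1/y := by
      intro h
      exact hne k (by rw [h, one_div_one_div])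
    have hA1 : Aa t + 1 = 2*(t:ℝ) + 3 := by simp only [Aa]; push_cast; ring
    have hA2 : Aa t - 1 = 2*(t:ℝ) + 1 := by simp only [Aa]; push_cast; ring
    have hkr : (k:ℝ) = 2*(t:ℝ) + 1 := by rw [ht]; push_cast; ring
    have hmem : 1/y ∈ Ioo (2*(t:ℝ) + 1) (2*(t:ℝ) + 3) :=
      ⟨by have := lt_of_le_of_ne hkle hne'; linarith [hkr], by linarith [hklt, hkr]⟩
    have := inv_Ioo (by positivity) hmem
    rw [one_div_one_div] at this
    simp only [Jb, hA1, hA2]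
    exact ⟨this.1, this.2⟩

lemma Jb_cover {y : ℝ} (hy : y ∈ Ioo (-1:ℝ) 1) (hne : ∀ m : ℤ, y ≠ 1 / (m:ℝ)) :
    ∃ i, y ∈ Jb i := by
  obtain ⟨hy0, hy1⟩ := hy
  have hyne : y ≠ 0 := by
    have := hne 0; simpa using this
  rcases lt_or_gt_of_ne hyne with hneg | hpos
  · -- negative case
    have hz : -y ∈ Ioo (0:ℝ) 1 := ⟨by linarith, by linarith⟩
    have hzne : ∀ m : ℕ, -y ≠ 1 / (m:ℝ) := by
      intro m h
      apply hne (-(m:ℤ))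
      push_cast
      rw [div_neg, ← h]; ring
    obtain ⟨n, hn⟩ := Jb_cover_pos hz hzne
    refine ⟨(n, false), ?_⟩
    simp only [Jb] at hn ⊢
    exact ⟨by linarith [hn.2], by linarith [hn.1]⟩
  · have hz : y ∈ Ioo (0:ℝ) 1 := ⟨hpos, hy1⟩
    have hzne : ∀ m : ℕ, y ≠ 1 / (m:ℝ) := by
      intro m h
      exact hne (m:ℤ) (by push_cast; exact h)
    obtain ⟨n, hn⟩ := Jb_cover_pos hz hzne
    exact ⟨(n, true), hn⟩

lemma null_vert (c : ℝ) : volume (({c} : Set ℝ) ×ˢ (univ : Set ℝ)) = 0 := by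
  rw [show (volume : Measure (ℝ × ℝ)) = (volume : Measure ℝ).prod volume from rfl,
    Measure.prod_prod]
  simp

lemma null_horiz (c : ℝ) : volume ((univ : Set ℝ) ×ˢ ({c} : Set ℝ)) = 0 := by
  rw [show (volume : Measure (ℝ × ℝ)) = (volume : Measure ℝ).prod volume from rfl,
    Measure.prod_prod]
  simp

end EvenCF

open EvenCF

/-- `μ̄_e` is `T̄_e`-invariant. -/
theorem muBarE_invariant :
    ∀ E : Set (ℝ × ℝ), MeasurableSet E → E ⊆ Ioo (0 : ℝ) 1 ×ˢ Ioo (-1 : ℝ) 1 →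
      muBarE (barTE ⁻¹' E) = muBarE E := by
  intro E hE hEsub
  set S : Set (ℝ × ℝ) := Ioo (0 : ℝ) 1 ×ˢ Ioo (-1 : ℝ) 1 with hS
  have hSm : MeasurableSet S := measurableSet_Ioo.prod measurableSet_Ioo
  set ν : Measure (ℝ × ℝ) := volume.withDensity dens with hν
  have hmuν : muBarE = ν.restrict S := by
    rw [muBarE, hν, restrict_withDensity hSm]; rfl
  have hmu : ∀ A : Set (ℝ × ℝ), muBarE A = ν (A ∩ S) := by
    intro A; rw [hmuν, Measure.restrict_apply' hSm]
  rw [hmu, hmu, inter_eq_left.mpr hEsub]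
  have hνap : ∀ A : Set (ℝ × ℝ), ν A = ∫⁻ p in A, dens p := fun A =>
    withDensity_apply' dens A
  have hAC : ∀ {A : Set (ℝ × ℝ)}, volume A = 0 → ν A = 0 := fun h =>
    (withDensity_absolutelyContinuous volume dens) h
  -- the branch pieces
  set f : ℕ × Bool → Set (ℝ × ℝ) := fun i => barTE ⁻¹' E ∩ (Ib i ×ˢ Ioo (-1:ℝ) 1) with hf
  set g : ℕ × Bool → Set (ℝ × ℝ) := fun i => E ∩ (Ioo (0:ℝ) 1 ×ˢ Jb i) with hg
  have hfm : ∀ i, MeasurableSet (f i) := fun i =>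
    (measurable_barTE hE).inter ((Ib_meas i).prod measurableSet_Ioo)
  have hgm : ∀ i, MeasurableSet (g i) := fun i =>
    hE.inter (measurableSet_Ioo.prod (Jb_meas i))
  have hfd : Pairwise (Function.onFun Disjoint f) := by
    intro i j hij
    have := Ib_disjoint hij
    rw [Function.onFun, Set.disjoint_left] at this ⊢
    rintro p ⟨-, hp1, -⟩ ⟨-, hq1, -⟩
    exact this hp1 hq1
  have hgd : Pairwise (Function.onFun Disjoint g) := by
    intro i j hij
    have := Jb_disjoint hij
    rw [Function.onFun, Set.disjoint_left] at this ⊢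
    rintro p ⟨-, -, hp2⟩ ⟨-, -, hq2⟩
    exact this hp2 hq2
  -- step 1 : reduce to the union of branch pieces
  have hsub1 : (⋃ i, f i) ⊆ barTE ⁻¹' E ∩ S := by
    refine iUnion_subset fun i => inter_subset_inter_right _ ?_
    exact Set.prod_mono (Ib_subset i) (subset_refl _)
  have hnull1 : ν ((barTE ⁻¹' E ∩ S) \ ⋃ i, f i) = 0 := by
    apply hAC
    apply measure_mono_null (t := ⋃ m : ℕ, ({(1/(m:ℝ))} : Set ℝ) ×ˢ (univ : Set ℝ))
    · rintro p ⟨⟨hpE, hpS⟩, hnU⟩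
      by_contra hcon
      simp only [mem_iUnion, mem_prod, mem_singleton_iff, mem_univ, and_true] at hcon
      have hne : ∀ m : ℕ, p.1 ≠ 1/(m:ℝ) := fun m h => hcon ⟨m, h⟩
      obtain ⟨i, hi⟩ := Ib_cover hpS.1 hne
      exact hnU (mem_iUnion.mpr ⟨i, hpE, hi, hpS.2⟩)
    · exact measure_iUnion_null fun m => null_vert _
  have hstep1 : ν (barTE ⁻¹' E ∩ S) = ν (⋃ i, f i) :=
    (measure_eq_measure_of_null_diff hsub1 hnull1).symm
  -- step 2 : additivity
  have hstep2 : ν (⋃ i, f i) = ∑' i, ν (f i) := measure_iUnion hfd hfm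
  -- step 3 : change of variables
  have hstep3 : ∀ i, ν (f i) = ν (g i) := by
    intro i
    rw [hνap, hνap, hf, hg]
    have heq := branch_preimage i E
    simp only
    rw [heq]
    exact branch_lintegral i (hgm i) (inter_subset_right)
  -- step 4 : reassemble
  have hstep4 : ∑' i, ν (g i) = ν (⋃ i, g i) := (measure_iUnion hgd hgm).symm
  have hsub2 : (⋃ i, g i) ⊆ E := iUnion_subset fun i => inter_subset_left
  have hnull2 : ν (E \ ⋃ i, g i) = 0 := by
    apply hAC
    apply measure_mono_null (t := ⋃ m : ℤ, (univ : Set ℝ) ×ˢ ({(1/(m:ℝ))} : Set ℝ))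
    · rintro p ⟨hpE, hnU⟩
      have hpS := hEsub hpE
      by_contra hcon
      simp only [mem_iUnion, mem_prod, mem_univ, mem_singleton_iff, true_and] at hcon
      have hne : ∀ m : ℤ, p.2 ≠ 1/(m:ℝ) := fun m h => hcon ⟨m, h⟩
      obtain ⟨i, hi⟩ := Jb_cover hpS.2 hne
      exact hnU (mem_iUnion.mpr ⟨i, hpE, hpS.1, hi⟩)
    · exact measure_iUnion_null fun m => null_horiz _
  have hstep5 : ν (⋃ i, g i) = ν E :=
    measure_eq_measure_of_null_diff hsub2 hnull2
  rw [hstep1, hstep2]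
  rw [tsum_congr hstep3, hstep4, hstep5]
end

section
/- The Borel measure μ_e on (0,1) with density u ↦ 1/(1+u) + 1/(1−u) with respect to Lebesgue measure is an infinite σ-finite measure invariant under T_e: μ_e(T_e⁻¹(A)) = μ_e(A) for every Borel set A ⊆ (0,1). -/
open Set MeasureTheory

/-- The measure `μ_e` on `(0,1)` with density `u ↦ 1/(1+u) + 1/(1−u)` with
respect to Lebesgue measure. -/
noncomputable def muE : Measure ℝ :=
  ((volume : Measure ℝ).restrict (Ioo (0 : ℝ) 1)).withDensity
    (fun u => ENNReal.ofReal (1 / (1 + u) + 1 / (1 - u)))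

-- measurability
lemma measurable_dens : Measurable (fun u : ℝ => 1 / (1 + u) + 1 / (1 - u)) := by
  fun_prop

lemma measurable_TE : Measurable TE := by
  have h1 : Measurable fun x : ℝ => 1 / x := by fun_prop
  have hfl : Measurable fun x : ℝ => ⌊1 / x⌋ := Int.measurable_floor.comp h1
  have haE : Measurable aE := by
    unfold aE
    have hset : MeasurableSet {x : ℝ | Even ⌊1 / x⌋} := hfl (MeasurableSet.of_discrete (s := {n : ℤ | Even n}))
    exact Measurable.ite hset hfl (hfl.add_const 1)
  unfold TE
  have : Measurable fun x : ℝ => ((aE x : ℤ) : ℝ) := by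
    exact Measurable.comp (f := aE) (g := fun n : ℤ => (n : ℝ)) measurable_from_top haE
  exact (h1.sub this).abs

lemma muE_null {s : Set ℝ} (hs : volume s = 0) : muE s = 0 := by
  have h1 : (volume : Measure ℝ).restrict (Ioo 0 1) s = 0 :=
    le_antisymm (le_trans (Measure.restrict_le_self s) hs.le) zero_le
  exact withDensity_absolutelyContinuous _ _ h1

lemma muE_apply {S : Set ℝ} (hS : MeasurableSet S) (hsub : S ⊆ Ioo (0:ℝ) 1) :
    muE S = ∫⁻ x in S, ENNReal.ofReal (1 / (1 + x) + 1 / (1 - x)) ∂volume := by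
  rw [muE, withDensity_apply _ hS, Measure.restrict_restrict hS,
    inter_eq_self_of_subset_left hsub]

lemma muE_inter {S : Set ℝ} (hS : MeasurableSet S) : muE S = muE (S ∩ Ioo 0 1) := by
  rw [muE, withDensity_apply _ hS, withDensity_apply _ (hS.inter measurableSet_Ioo),
    Measure.restrict_restrict hS, Measure.restrict_restrict (hS.inter measurableSet_Ioo),
    inter_assoc, inter_self]

/-- branch intervals -/
def J (n : ℕ) : Set ℝ := Ioo (1 / ((n:ℝ) + 2)) (1 / ((n:ℝ) + 1))

lemma J_subset (n : ℕ) : J n ⊆ Ioo (0:ℝ) 1 := by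
  intro x hx
  have h2 : (0:ℝ) < (n:ℝ) + 2 := by positivity
  have h1 : (1:ℝ) ≤ (n:ℝ) + 1 := by
    have : (0:ℝ) ≤ (n:ℝ) := Nat.cast_nonneg n
    linarith
  constructor
  · exact lt_trans (by positivity) hx.1
  · calc x < 1 / ((n:ℝ) + 1) := hx.2
      _ ≤ 1 := by rw [div_le_one (by linarith)]; linarith

lemma mem_J_iff {n : ℕ} {x : ℝ} (hx : 0 < x) :
    x ∈ J n ↔ (n:ℝ) + 1 < 1 / x ∧ 1 / x < (n:ℝ) + 2 := by
  have h2 : (0:ℝ) < (n:ℝ) + 2 := by positivity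
  have h1 : (0:ℝ) < (n:ℝ) + 1 := by positivity
  constructor
  · rintro ⟨ha, hb⟩
    constructor
    · rw [lt_div_iff₀ hx]
      rw [lt_div_iff₀ h1] at hb
      linarith
    · rw [div_lt_iff₀ hx]
      rw [div_lt_iff₀ h2] at ha
      linarith
  · rintro ⟨ha, hb⟩
    rw [lt_div_iff₀ hx] at ha
    rw [div_lt_iff₀ hx] at hb
    constructor
    · rw [div_lt_iff₀ h2]; nlinarith
    · rw [lt_div_iff₀ h1]; nlinarith

lemma floor_of_mem {n : ℕ} {t : ℝ} (h1 : (n:ℝ) + 1 < t) (h2 : t < (n:ℝ) + 2) :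
    ⌊t⌋ = (n:ℤ) + 1 := by
  rw [Int.floor_eq_iff]
  constructor <;> push_cast <;> linarith

lemma aE_of_mem {n : ℕ} {x : ℝ} (h1 : (n:ℝ) + 1 < 1 / x) (h2 : 1 / x < (n:ℝ) + 2) :
    aE x = if Even n then (n:ℤ) + 2 else (n:ℤ) + 1 := by
  unfold aE
  rw [floor_of_mem h1 h2]
  by_cases hn : Even n
  · have : ¬ Even ((n:ℤ) + 1) := by
      simp [Int.even_add_one, hn]
    simp [this, hn]
    ring
  · have : Even ((n:ℤ) + 1) := by
      simp [Int.even_add_one, hn, Nat.not_even_iff_odd.mp hn]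
    simp [this, hn]

lemma TE_odd {n : ℕ} (hn : ¬ Even n) {x : ℝ} (h1 : (n:ℝ) + 1 < 1 / x)
    (h2 : 1 / x < (n:ℝ) + 2) : TE x = 1 / x - ((n:ℝ) + 1) := by
  unfold TE
  rw [aE_of_mem h1 h2, if_neg hn, abs_of_pos]
  · push_cast; ring
  · push_cast; linarith

lemma TE_even {n : ℕ} (hn : Even n) {x : ℝ} (h1 : (n:ℝ) + 1 < 1 / x)
    (h2 : 1 / x < (n:ℝ) + 2) : TE x = ((n:ℝ) + 2) - 1 / x := by
  unfold TE
  rw [aE_of_mem h1 h2, if_pos hn, abs_of_neg]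
  · push_cast; ring
  · push_cast; linarith

/-- inverse branch maps -/
noncomputable def phi (n : ℕ) (y : ℝ) : ℝ :=
  if Even n then 1 / ((n:ℝ) + 2 - y) else 1 / ((n:ℝ) + 1 + y)

lemma image_odd {n : ℕ} (hn : ¬ Even n) {A : Set ℝ} (hA : A ⊆ Ioo (0:ℝ) 1) :
    TE ⁻¹' A ∩ J n = (fun y => 1 / ((n:ℝ) + 1 + y)) '' A := by
  ext x
  constructor
  · rintro ⟨hxA, hxJ⟩
    have hx0 : 0 < x := (J_subset n hxJ).1
    obtain ⟨h1, h2⟩ := (mem_J_iff hx0).1 hxJ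
    refine ⟨TE x, hxA, ?_⟩
    rw [TE_odd hn h1 h2]
    show 1 / ((n:ℝ) + 1 + (1 / x - ((n:ℝ) + 1))) = x
    rw [show (n:ℝ) + 1 + (1 / x - ((n:ℝ) + 1)) = 1 / x by ring, one_div_one_div]
  · rintro ⟨y, hyA, rfl⟩
    obtain ⟨hy0, hy1⟩ := hA hyA
    have hden : (0:ℝ) < (n:ℝ) + 1 + y := by positivity
    have hx0 : 0 < 1 / ((n:ℝ) + 1 + y) := by positivity
    have hinv : 1 / (1 / ((n:ℝ) + 1 + y)) = (n:ℝ) + 1 + y := one_div_one_div _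
    have h1 : (n:ℝ) + 1 < 1 / (1 / ((n:ℝ) + 1 + y)) := by rw [hinv]; linarith
    have h2 : 1 / (1 / ((n:ℝ) + 1 + y)) < (n:ℝ) + 2 := by rw [hinv]; linarith
    refine ⟨?_, (mem_J_iff hx0).2 ⟨h1, h2⟩⟩
    show TE _ ∈ A
    rw [TE_odd hn h1 h2, hinv]
    simpa using hyA

lemma image_even {n : ℕ} (hn : Even n) {A : Set ℝ} (hA : A ⊆ Ioo (0:ℝ) 1) :
    TE ⁻¹' A ∩ J n = (fun y => 1 / ((n:ℝ) + 2 - y)) '' A := by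
  ext x
  constructor
  · rintro ⟨hxA, hxJ⟩
    have hx0 : 0 < x := (J_subset n hxJ).1
    obtain ⟨h1, h2⟩ := (mem_J_iff hx0).1 hxJ
    refine ⟨TE x, hxA, ?_⟩
    rw [TE_even hn h1 h2]
    show 1 / ((n:ℝ) + 2 - ((n:ℝ) + 2 - 1 / x)) = x
    rw [show (n:ℝ) + 2 - ((n:ℝ) + 2 - 1 / x) = 1 / x by ring, one_div_one_div]
  · rintro ⟨y, hyA, rfl⟩
    obtain ⟨hy0, hy1⟩ := hA hyA
    have hden : (0:ℝ) < (n:ℝ) + 2 - y := by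
      have : (0:ℝ) ≤ (n:ℝ) := Nat.cast_nonneg n
      linarith
    have hx0 : 0 < 1 / ((n:ℝ) + 2 - y) := by positivity
    have hinv : 1 / (1 / ((n:ℝ) + 2 - y)) = (n:ℝ) + 2 - y := one_div_one_div _
    have h1 : (n:ℝ) + 1 < 1 / (1 / ((n:ℝ) + 2 - y)) := by rw [hinv]; linarith
    have h2 : 1 / (1 / ((n:ℝ) + 2 - y)) < (n:ℝ) + 2 := by rw [hinv]; linarith
    refine ⟨?_, (mem_J_iff hx0).2 ⟨h1, h2⟩⟩
    show TE _ ∈ A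
    rw [TE_even hn h1 h2, hinv]
    simpa using hyA

lemma key_alg {t : ℝ} (ht : 1 < t) :
    (t ^ 2)⁻¹ * (1 / (1 + 1 / t) + 1 / (1 - 1 / t)) = 1 / (t - 1) - 1 / (t + 1) := by
  have h0 : (0:ℝ) < t := lt_trans one_pos ht
  have h1 : t - 1 ≠ 0 := by intro h; nlinarith
  have h2 : t + 1 ≠ 0 := by positivity
  have h3 : t ≠ 0 := ne_of_gt h0
  field_simp
  ring

/-- the summand after change of variables -/
noncomputable def g (n : ℕ) (y : ℝ) : ℝ :=
  if Even n then 1 / ((n:ℝ) + 1 - y) - 1 / ((n:ℝ) + 3 - y)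
  else 1 / ((n:ℝ) + y) - 1 / ((n:ℝ) + 2 + y)

lemma measurable_g (n : ℕ) : Measurable fun y => ENNReal.ofReal (g n y) := by
  unfold g
  by_cases hn : Even n <;> simp only [hn, if_true, if_false] <;> fun_prop

lemma g_nonneg {n : ℕ} {y : ℝ} (hy : y ∈ Ioo (0:ℝ) 1) : 0 ≤ g n y := by
  obtain ⟨hy0, hy1⟩ := hy
  have hn0 : (0:ℝ) ≤ (n:ℝ) := Nat.cast_nonneg n
  unfold g
  by_cases hn : Even n <;> simp only [hn, if_true, if_false] <;>
  · rw [sub_nonneg]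
    apply one_div_le_one_div_of_le <;> linarith

lemma lintegral_image_eq_lintegral_abs_deriv_mul {s : Set ℝ} {f f' : ℝ → ℝ}
    (hs : MeasurableSet s) (hf' : ∀ x ∈ s, HasDerivWithinAt f (f' x) s x)
    (hf : InjOn f s) (gfun : ℝ → ENNReal) :
    ∫⁻ x in f '' s, gfun x = ∫⁻ x in s, ENNReal.ofReal |f' x| * gfun (f x) := by
  simpa only [ContinuousLinearMap.det_toSpanSingleton] using
    lintegral_image_eq_lintegral_abs_det_fderiv_mul volume hs
      (fun x hx => (hf' x hx).hasFDerivWithinAt) hf gfun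

lemma lint_branch {n : ℕ} {A : Set ℝ} (hA : MeasurableSet A) (hA1 : A ⊆ Ioo (0:ℝ) 1) :
    ∫⁻ x in TE ⁻¹' A ∩ J n, ENNReal.ofReal (1 / (1 + x) + 1 / (1 - x)) ∂volume
      = ∫⁻ y in A, ENNReal.ofReal (g n y) ∂volume := by
  by_cases hn : Even n
  · rw [image_even hn hA1]
    have hd : ∀ y ∈ A, HasDerivWithinAt (fun y => 1 / ((n:ℝ) + 2 - y))
        ((((n:ℝ) + 2 - y) ^ 2)⁻¹) A y := by
      intro y hy
      obtain ⟨hy0, hy1⟩ := hA1 hy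
      have hne : (n:ℝ) + 2 - y ≠ 0 := by
        have : (0:ℝ) ≤ (n:ℝ) := Nat.cast_nonneg n
        intro h; nlinarith
      have h1 : HasDerivAt (fun y : ℝ => (n:ℝ) + 2 - y) (-1) y := by
        exact (hasDerivAt_id' y).const_sub ((n:ℝ) + 2)
      have := h1.inv hne
      simp only [one_div]
      exact (this.congr_deriv (by ring)).hasDerivWithinAt
    have hinj : InjOn (fun y => 1 / ((n:ℝ) + 2 - y)) A := by
      intro a ha b hb hab
      obtain ⟨ha0, ha1⟩ := hA1 ha
      obtain ⟨hb0, hb1⟩ := hA1 hb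
      have h1 : (0:ℝ) < (n:ℝ) + 2 - a := by
        have : (0:ℝ) ≤ (n:ℝ) := Nat.cast_nonneg n; linarith
      have h2 : (0:ℝ) < (n:ℝ) + 2 - b := by
        have : (0:ℝ) ≤ (n:ℝ) := Nat.cast_nonneg n; linarith
      simp only at hab
      rw [div_eq_div_iff (by positivity) (by positivity)] at hab
      linarith [hab]
    rw [_root_.lintegral_image_eq_lintegral_abs_deriv_mul hA hd hinj]
    apply setLIntegral_congr_fun hA
    intro y hy
    beta_reduce
    obtain ⟨hy0, hy1⟩ := hA1 hy
    have hn0 : (0:ℝ) ≤ (n:ℝ) := Nat.cast_nonneg n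
    have ht : 1 < (n:ℝ) + 2 - y := by linarith
    rw [← ENNReal.ofReal_mul (abs_nonneg _), abs_of_pos (by positivity)]
    congr 1
    have := key_alg ht
    unfold g
    rw [if_pos hn]
    calc (((n:ℝ) + 2 - y) ^ 2)⁻¹ * (1 / (1 + 1 / ((n:ℝ) + 2 - y)) + 1 / (1 - 1 / ((n:ℝ) + 2 - y)))
        = 1 / ((n:ℝ) + 2 - y - 1) - 1 / ((n:ℝ) + 2 - y + 1) := this
      _ = 1 / ((n:ℝ) + 1 - y) - 1 / ((n:ℝ) + 3 - y) := by ring_nf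
  · rw [image_odd hn hA1]
    have hd : ∀ y ∈ A, HasDerivWithinAt (fun y => 1 / ((n:ℝ) + 1 + y))
        (-(((n:ℝ) + 1 + y) ^ 2)⁻¹) A y := by
      intro y hy
      obtain ⟨hy0, hy1⟩ := hA1 hy
      have hne : (n:ℝ) + 1 + y ≠ 0 := by positivity
      have h1 : HasDerivAt (fun y : ℝ => (n:ℝ) + 1 + y) 1 y := by
        simpa using ((hasDerivAt_id y).const_add ((n:ℝ) + 1))
      have := h1.inv hne
      simp only [one_div]
      exact (this.congr_deriv (by ring)).hasDerivWithinAt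
    have hinj : InjOn (fun y => 1 / ((n:ℝ) + 1 + y)) A := by
      intro a ha b hb hab
      obtain ⟨ha0, ha1⟩ := hA1 ha
      obtain ⟨hb0, hb1⟩ := hA1 hb
      simp only at hab
      rw [div_eq_div_iff (by positivity) (by positivity)] at hab
      linarith [hab]
    rw [_root_.lintegral_image_eq_lintegral_abs_deriv_mul hA hd hinj]
    apply setLIntegral_congr_fun hA
    intro y hy
    beta_reduce
    obtain ⟨hy0, hy1⟩ := hA1 hy
    have hn1 : (1:ℝ) ≤ (n:ℝ) := by
      have : n ≠ 0 := by rintro rfl; exact hn Even.zero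
      exact_mod_cast Nat.one_le_iff_ne_zero.2 this
    have ht : 1 < (n:ℝ) + 1 + y := by linarith
    rw [← ENNReal.ofReal_mul (abs_nonneg _), abs_neg, abs_of_pos (by positivity)]
    congr 1
    have := key_alg ht
    unfold g
    rw [if_neg hn]
    calc (((n:ℝ) + 1 + y) ^ 2)⁻¹ * (1 / (1 + 1 / ((n:ℝ) + 1 + y)) + 1 / (1 - 1 / ((n:ℝ) + 1 + y)))
        = 1 / ((n:ℝ) + 1 + y - 1) - 1 / ((n:ℝ) + 1 + y + 1) := this
      _ = 1 / ((n:ℝ) + y) - 1 / ((n:ℝ) + 2 + y) := by ring_nf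

lemma telescope {b : ℝ} (hb : 0 < b) :
    HasSum (fun k : ℕ => 1 / (2 * (k:ℝ) + b) - 1 / (2 * (k:ℝ) + 2 + b)) (1 / b) := by
  have hpos : ∀ k : ℕ, (0:ℝ) < 2 * (k:ℝ) + b := by
    intro k; positivity
  have hnn : ∀ k : ℕ, 0 ≤ 1 / (2 * (k:ℝ) + b) - 1 / (2 * (k:ℝ) + 2 + b) := by
    intro k
    rw [sub_nonneg]
    apply one_div_le_one_div_of_le (hpos k)
    linarith
  rw [hasSum_iff_tendsto_nat_of_nonneg hnn]
  have key : ∀ N : ℕ, ∑ k ∈ Finset.range N, (1 / (2 * (k:ℝ) + b) - 1 / (2 * (k:ℝ) + 2 + b))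
      = 1 / b - 1 / (2 * (N:ℝ) + b) := by
    intro N
    have := Finset.sum_range_sub' (f := fun k : ℕ => 1 / (2 * (k:ℝ) + b)) N
    rw [show (1:ℝ) / b = 1 / (2 * ((0:ℕ):ℝ) + b) by norm_num, ← this]
    apply Finset.sum_congr rfl
    intro k _
    push_cast
    ring_nf
  simp_rw [key]
  have h1 : Filter.Tendsto (fun N : ℕ => 1 / (2 * (N:ℝ) + b)) Filter.atTop (nhds 0) := by
    simp only [one_div]
    apply Filter.Tendsto.comp tendsto_inv_atTop_zero
    apply Filter.tendsto_atTop_add_const_right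
    exact (tendsto_natCast_atTop_atTop (R := ℝ)).const_mul_atTop two_pos
  simpa using (tendsto_const_nhds (x := 1 / b)).sub h1

lemma tsum_g {y : ℝ} (hy : y ∈ Ioo (0:ℝ) 1) :
    ∑' n : ℕ, ENNReal.ofReal (g n y) = ENNReal.ofReal (1 / (1 + y) + 1 / (1 - y)) := by
  obtain ⟨hy0, hy1⟩ := hy
  have hnn : ∀ n : ℕ, 0 ≤ g n y := fun n => g_nonneg ⟨hy0, hy1⟩
  have he : HasSum (fun k : ℕ => g (2 * k) y) (1 / (1 - y)) := by
    have h := telescope (b := 1 - y) (by linarith)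
    have heq : (fun k : ℕ => g (2 * k) y)
        = fun k : ℕ => 1 / (2 * (k:ℝ) + (1 - y)) - 1 / (2 * (k:ℝ) + 2 + (1 - y)) := by
      funext k
      unfold g
      rw [if_pos (even_two_mul k)]
      push_cast
      ring_nf
    rw [heq]
    exact h
  have ho : HasSum (fun k : ℕ => g (2 * k + 1) y) (1 / (1 + y)) := by
    have h := telescope (b := 1 + y) (by linarith)
    have heq : (fun k : ℕ => g (2 * k + 1) y)
        = fun k : ℕ => 1 / (2 * (k:ℝ) + (1 + y)) - 1 / (2 * (k:ℝ) + 2 + (1 + y)) := by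
      funext k
      unfold g
      rw [if_neg (by simp [Nat.even_add_one, parity_simps])]
      push_cast
      ring_nf
    rw [heq]
    exact h
  rw [← tsum_even_add_odd (f := fun n : ℕ => ENNReal.ofReal (g n y))
    ENNReal.summable ENNReal.summable,
    ← ENNReal.ofReal_tsum_of_nonneg (fun k => hnn (2 * k)) he.summable,
    ← ENNReal.ofReal_tsum_of_nonneg (fun k => hnn (2 * k + 1)) ho.summable,
    he.tsum_eq, ho.tsum_eq,
    ← ENNReal.ofReal_add (one_div_nonneg.mpr (by linarith)) (one_div_nonneg.mpr (by linarith))]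
  rw [add_comm]

lemma J_disjoint : Pairwise (Function.onFun Disjoint J) := by
  have key : ∀ m n : ℕ, m < n → Disjoint (J m) (J n) := by
    intro m n hmn
    rw [Set.disjoint_left]
    intro x hxm hxn
    have h1 : x < 1 / ((n:ℝ) + 1) := hxn.2
    have h2 : 1 / ((m:ℝ) + 2) < x := hxm.1
    have h3 : 1 / ((n:ℝ) + 1) ≤ 1 / ((m:ℝ) + 2) := by
      apply one_div_le_one_div_of_le (by positivity)
      have : (m:ℝ) + 1 ≤ (n:ℝ) := by exact_mod_cast Nat.succ_le_of_lt hmn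
      linarith
    linarith
  intro m n hmn
  rcases lt_or_gt_of_ne hmn with h | h
  · exact key m n h
  · exact (key n m h).symm

lemma cover : Ioo (0:ℝ) 1 ⊆ (⋃ n : ℕ, J n) ∪ Set.range (fun n : ℕ => 1 / ((n:ℝ) + 1)) := by
  intro x ⟨hx0, hx1⟩
  have hinv : 1 < 1 / x := by rw [lt_div_iff₀ hx0]; linarith
  set t := 1 / x with htdef
  have hm1 : 1 ≤ ⌊t⌋ := by
    rw [Int.le_floor]; exact_mod_cast hinv.le
  set n : ℕ := (⌊t⌋ - 1).toNat with hndef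
  have h' : ((n:ℤ)) = ⌊t⌋ - 1 := by
    rw [hndef]; exact Int.toNat_of_nonneg (by omega)
  have hcast : (n:ℝ) = (⌊t⌋:ℝ) - 1 := by exact_mod_cast h'
  have hfl : ((⌊t⌋:ℝ)) ≤ t := Int.floor_le t
  have hfu : t < (⌊t⌋:ℝ) + 1 := Int.lt_floor_add_one t
  rcases eq_or_lt_of_le hfl with heq | hlt
  · right
    refine ⟨n, ?_⟩
    simp only
    rw [hcast, show (⌊t⌋:ℝ) - 1 + 1 = (⌊t⌋:ℝ) by ring, heq, htdef, one_div_one_div]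
  · left
    refine mem_iUnion.2 ⟨n, ?_⟩
    have hxt : x = 1 / t := by rw [htdef, one_div_one_div]
    rw [mem_J_iff hx0, ← htdef]
    constructor
    · rw [hcast]; linarith
    · rw [hcast]; linarith

lemma J_measurable (n : ℕ) : MeasurableSet (J n) := measurableSet_Ioo


/-- `μ_e` is an infinite, σ-finite, `T_e`-invariant measure on `(0,1)`. -/
theorem muE_infinite_sigmaFinite_invariant :
    muE Set.univ = ⊤ ∧
    SigmaFinite muE ∧
    ∀ A : Set ℝ, MeasurableSet A → A ⊆ Ioo (0 : ℝ) 1 →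
      muE (TE ⁻¹' A) = muE A := by
  refine ⟨?_, ?_, ?_⟩
  · -- infinite
    rw [muE, withDensity_apply _ MeasurableSet.univ, Measure.restrict_univ]
    by_contra h
    have hmeas : AEStronglyMeasurable (fun u : ℝ => 1 / (1 + u) + 1 / (1 - u))
        ((volume : Measure ℝ).restrict (Ioo 0 1)) :=
      measurable_dens.aestronglyMeasurable
    have hnn : 0 ≤ᵐ[(volume : Measure ℝ).restrict (Ioo 0 1)]
        fun u : ℝ => 1 / (1 + u) + 1 / (1 - u) := by
      rw [Filter.EventuallyLE, ae_restrict_iff' measurableSet_Ioo]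
      filter_upwards with x hx
      obtain ⟨h0, h1⟩ := hx
      have : (0:ℝ) ≤ 1 / (1 + x) := one_div_nonneg.mpr (by linarith)
      have : (0:ℝ) ≤ 1 / (1 - x) := one_div_nonneg.mpr (by linarith)
      simp only [Pi.zero_apply]
      linarith
    have hint : Integrable (fun u : ℝ => 1 / (1 + u) + 1 / (1 - u))
        ((volume : Measure ℝ).restrict (Ioo 0 1)) :=
      (lintegral_ofReal_ne_top_iff_integrable hmeas hnn).1 h
    have hint2 : IntegrableOn (fun x : ℝ => (x - 1)⁻¹) (Ioo 0 1) volume := by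
      apply hint.mono
      · exact (measurable_id.sub_const 1).inv.aestronglyMeasurable
      · rw [ae_restrict_iff' measurableSet_Ioo]
        filter_upwards with x hx
        obtain ⟨h0, h1⟩ := hx
        have hx1 : (0:ℝ) < 1 - x := by linarith
        have a1 : (0:ℝ) < 1 / (1 + x) := one_div_pos.mpr (by linarith)
        have a2 : (0:ℝ) < 1 / (1 - x) := one_div_pos.mpr (by linarith)
        rw [Real.norm_eq_abs, Real.norm_eq_abs, abs_inv,
          abs_of_neg (show x - 1 < 0 by linarith), abs_of_pos (by linarith),
          show -(x - 1) = 1 - x by ring, ← one_div]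
        linarith
    have hint3 : IntegrableOn (fun x : ℝ => (x - 1)⁻¹) (Ioc 0 1) volume :=
      hint2.congr_set_ae (Ioo_ae_eq_Ioc (a := (0:ℝ)) (b := 1)).symm
    have hII : IntervalIntegrable (fun x : ℝ => (x - 1)⁻¹) volume 0 1 := by
      rw [intervalIntegrable_iff_integrableOn_Ioc_of_le (by norm_num)]
      exact hint3
    rw [intervalIntegrable_sub_inv_iff] at hII
    rcases hII with h01 | h1
    · norm_num at h01
    · apply h1
      rw [Set.mem_uIcc]
      norm_num
  · -- sigma finite
    unfold muE
    infer_instance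
  · -- invariant
    intro A hA hA1
    have hpre : MeasurableSet (TE ⁻¹' A) := measurable_TE hA
    have hJA : ∀ n, MeasurableSet (TE ⁻¹' A ∩ J n) := fun n => hpre.inter (J_measurable n)
    rw [muE_inter hpre]
    have hU : MeasurableSet (⋃ n, J n) := MeasurableSet.iUnion J_measurable
    have hinterJ : ∀ n, (TE ⁻¹' A ∩ Ioo 0 1) ∩ J n = TE ⁻¹' A ∩ J n := fun n =>
      Set.ext fun x => ⟨fun ⟨⟨h1, _⟩, h3⟩ => ⟨h1, h3⟩,
        fun ⟨h1, h3⟩ => ⟨⟨h1, J_subset n h3⟩, h3⟩⟩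
    have hnull : muE ((TE ⁻¹' A ∩ Ioo 0 1) \ ⋃ n, J n) = 0 := by
      apply muE_null
      apply measure_mono_null _
        ((countable_range (fun n : ℕ => 1 / ((n:ℝ) + 1))).measure_zero volume)
      rintro x ⟨⟨_, hxI⟩, hxU⟩
      rcases cover hxI with h | h
      · exact absurd h hxU
      · exact h
    have hsplit : muE (TE ⁻¹' A ∩ Ioo 0 1) = muE (⋃ n, TE ⁻¹' A ∩ J n) := by
      calc muE (TE ⁻¹' A ∩ Ioo 0 1)
          = muE ((TE ⁻¹' A ∩ Ioo 0 1) ∩ ⋃ n, J n)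
            + muE ((TE ⁻¹' A ∩ Ioo 0 1) \ ⋃ n, J n) :=
            (measure_inter_add_diff _ hU).symm
        _ = muE ((TE ⁻¹' A ∩ Ioo 0 1) ∩ ⋃ n, J n) := by rw [hnull, add_zero]
        _ = muE (⋃ n, TE ⁻¹' A ∩ J n) := by
            rw [inter_iUnion]
            exact congrArg _ (iUnion_congr hinterJ)
    rw [hsplit, measure_iUnion
      (fun m n hmn => Disjoint.mono inter_subset_right inter_subset_right (J_disjoint hmn))
      hJA]
    have hterm : ∀ n, muE (TE ⁻¹' A ∩ J n)
        = ∫⁻ y in A, ENNReal.ofReal (g n y) ∂volume := by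
      intro n
      rw [muE_apply (hJA n) (fun x hx => J_subset n hx.2), lint_branch hA hA1]
    simp_rw [hterm]
    rw [← lintegral_tsum (fun n => (measurable_g n).aemeasurable)]
    rw [muE_apply hA hA1]
    apply setLIntegral_congr_fun hA
    intro y hy
    exact tsum_g (hA1 hy)
end

section
/- Let α > 1 be irrational. Then there exists r ≥ 1 with T_e^r(1/α) = 1/α (i.e. α has purely periodic even continued fraction expansion) if and only if α is a quadratic irrational whose Galois conjugate ᾱ satisfies −1 < ᾱ < 1. Moreover, in that case T̄_e^r(1/α, −ᾱ) = (1/α, −ᾱ), so that −ᾱ has the purely periodic extended even continued fraction expansion given by the reversed period of α. -/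
lemma aE_even (x : ℝ) : Even (aE x) := by
  unfold aE; split
  · assumption
  · exact Int.even_add_one.mpr (by assumption)

lemma one_lt_inv_of (x : ℝ) (hx : 0 < x) (hx1 : x < 1) : 1 < 1/x := by
  rw [one_div]; exact (one_lt_inv₀ hx).mpr hx1

lemma aE_ge_two (x : ℝ) (hx : 0 < x) (hx1 : x < 1) : 2 ≤ aE x := by
  have h1 : (1:ℝ) < 1/x := one_lt_inv_of x hx hx1
  have hf : 1 ≤ ⌊(1:ℝ)/x⌋ := Int.le_floor.mpr (by exact_mod_cast h1.le)
  unfold aE; split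
  · rename_i he
    rcases he with ⟨k, hk⟩
    omega
  · omega

lemma inv_irrational' (x : ℝ) (hirr : Irrational x) : Irrational (1/x) := by
  rw [one_div]; exact hirr.inv

lemma inv_ne_aE (x : ℝ) (hirr : Irrational x) : 1/x - (aE x : ℝ) ≠ 0 := by
  have := (inv_irrational' x hirr).sub_intCast (aE x)
  exact this.ne_zero

lemma aE_dist (x : ℝ) (hx : 0 < x) (hx1 : x < 1) (hirr : Irrational x) :
    |1/x - (aE x : ℝ)| < 1 := by
  have hlt : (⌊(1:ℝ)/x⌋ : ℝ) < 1/x := by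
    rcases lt_or_eq_of_le (Int.floor_le ((1:ℝ)/x)) with h | h
    · exact h
    · exact absurd h.symm ((inv_irrational' x hirr).ne_int _)
  have hlt2 : 1/x < (⌊(1:ℝ)/x⌋ : ℝ) + 1 := Int.lt_floor_add_one _
  unfold aE; split <;> push_cast <;> rw [abs_lt] <;> constructor <;> linarith

lemma epsE_cases (x : ℝ) : epsE x = 1 ∨ epsE x = -1 := by
  unfold epsE; split; exacts [Or.inl rfl, Or.inr rfl]

lemma eps_mul_TE (x : ℝ) (hirr : Irrational x) :
    epsE x * TE x = 1/x - (aE x : ℝ) := by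
  have hne := inv_ne_aE x hirr
  unfold epsE TE; split
  · rename_i h; rw [one_mul, abs_of_pos h]
  · rename_i h
    have h' : 1/x - (aE x:ℝ) < 0 := lt_of_le_of_ne (not_lt.mp h) hne
    rw [abs_of_neg h']; ring

lemma TE_pos (x : ℝ) (hirr : Irrational x) : 0 < TE x :=
  abs_pos.mpr (inv_ne_aE x hirr)

lemma TE_lt_one (x : ℝ) (hx : 0 < x) (hx1 : x < 1) (hirr : Irrational x) : TE x < 1 :=
  aE_dist x hx hx1 hirr

lemma TE_irrational (x : ℝ) (hirr : Irrational x) : Irrational (TE x) := by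
  have h := (inv_irrational' x hirr).sub_intCast (aE x)
  unfold TE
  rcases abs_choice (1/x - (aE x : ℝ)) with h' | h' <;> rw [h']
  · exact h
  · exact h.neg

noncomputable def xs (α : ℝ) (n : ℕ) : ℝ := TE^[n] (1/α)

lemma xs_succ (α : ℝ) (n : ℕ) : xs α (n+1) = TE (xs α n) :=
  Function.iterate_succ_apply' _ _ _

/-- integer version of epsE -/
noncomputable def esZ (α : ℝ) (n : ℕ) : ℤ :=
  if 0 < 1 / (xs α n) - (aE (xs α n) : ℝ) then 1 else -1

lemma esZ_cast (α : ℝ) (n : ℕ) : ((esZ α n : ℤ) : ℝ) = epsE (xs α n) := by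
  unfold esZ epsE; split <;> simp

lemma esZ_sq (α : ℝ) (n : ℕ) : esZ α n ^ 2 = 1 := by
  unfold esZ; split <;> norm_num

section Seq
variable (α : ℝ)

lemma xs_good (hα : 1 < α) (hirr : Irrational α) : ∀ n, 0 < xs α n ∧ xs α n < 1 ∧ Irrational (xs α n) := by
  intro n
  induction n with
  | zero =>
    have h0 : (0:ℝ) < α := lt_trans one_pos hα
    refine ⟨by simpa [xs] using (by positivity : (0:ℝ) < 1/α), ?_, ?_⟩
    · have : 1/α < 1 := by rw [div_lt_one h0]; exact hα
      simpa [xs]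
    · simpa [xs] using inv_irrational' α hirr
  | succ n ih =>
    obtain ⟨h0, h1, hI⟩ := ih
    rw [xs_succ]
    exact ⟨TE_pos _ hI, TE_lt_one _ h0 h1 hI, TE_irrational _ hI⟩

lemma as_ge_two (hα : 1 < α) (hirr : Irrational α) (n : ℕ) : 2 ≤ aE (xs α n) :=
  aE_ge_two _ (xs_good α hα hirr n).1 (xs_good α hα hirr n).2.1

/-- the fundamental relation: (1/xs n) = aE + epsE * xs (n+1) -/
lemma xs_rel (hα : 1 < α) (hirr : Irrational α) (n : ℕ) :
    1 / xs α n = (aE (xs α n) : ℝ) + epsE (xs α n) * xs α (n+1) := by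
  rw [xs_succ, eps_mul_TE _ (xs_good α hα hirr n).2.2]; ring

end Seq

lemma epsE_sq (x : ℝ) : epsE x ^ 2 = 1 := by
  rcases epsE_cases x with h | h <;> rw [h] <;> norm_num

lemma quad_step (P Q R a e s t : ℝ) (H1 : P*s^2 + Q*s + R = 0)
    (H2 : s*t = a*t + e) (H3 : e^2 = 1) :
    (P*a^2 + Q*a + R)*t^2 + e*(2*a*P + Q)*t + P = 0 := by
  linear_combination t^2 * H1 + (-(P*(a*t + s*t) + Q*t) - P*e) * H2 + (-P) * H3

/-- conjugate orbit -/
noncomputable def bbs (α β : ℝ) : ℕ → ℝ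
  | 0 => β
  | n+1 => epsE (xs α n) / (bbs α β n - (aE (xs α n) : ℝ))

/-- coefficient triples -/
noncomputable def trip (α : ℝ) (A B C : ℤ) : ℕ → ℤ × ℤ × ℤ
  | 0 => (A, B, C)
  | n+1 =>
    let p := trip α A B C n
    (p.1 * (aE (xs α n))^2 + p.2.1 * (aE (xs α n)) + p.2.2,
     esZ α n * (2 * (aE (xs α n)) * p.1 + p.2.1),
     p.1)

lemma bbs_rel (α β : ℝ) (n : ℕ) (h : Irrational (bbs α β n)) :
    bbs α β n * bbs α β (n+1) = (aE (xs α n) : ℝ) * bbs α β (n+1) + epsE (xs α n) := by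
  have hne : bbs α β n - (aE (xs α n) : ℝ) ≠ 0 :=
    sub_ne_zero.mpr (h.ne_int _)
  have : bbs α β (n+1) * (bbs α β n - (aE (xs α n) : ℝ)) = epsE (xs α n) := by
    show epsE (xs α n) / (bbs α β n - (aE (xs α n) : ℝ)) * _ = _
    exact div_mul_cancel₀ _ hne
  linear_combination this

lemma bbs_irr (α β : ℝ) (n : ℕ) (h : Irrational (bbs α β n)) :
    Irrational (bbs α β (n+1)) := by
  show Irrational (epsE (xs α n) / (bbs α β n - (aE (xs α n) : ℝ)))
  have h1 : Irrational (bbs α β n - (aE (xs α n) : ℝ)) := h.sub_intCast _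
  have h2 : Irrational (bbs α β n - (aE (xs α n) : ℝ))⁻¹ := h1.inv
  rcases epsE_cases (xs α n) with he | he <;> rw [he]
  · simpa [one_div] using h2
  · have := h2.neg
    convert this using 1
    field_simp
  
lemma al_rel (α : ℝ) (hα : 1 < α) (hirr : Irrational α) (n : ℕ) :
    (1/xs α n) * (1/xs α (n+1)) = (aE (xs α n) : ℝ) * (1/xs α (n+1)) + epsE (xs α n) := by
  have h := xs_rel α hα hirr n
  have hx' : xs α (n+1) ≠ 0 := ne_of_gt (xs_good α hα hirr (n+1)).1
  calc (1/xs α n) * (1/xs α (n+1))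
      = ((aE (xs α n) : ℝ) + epsE (xs α n) * xs α (n+1)) * (1/xs α (n+1)) := by rw [h]
    _ = (aE (xs α n) : ℝ) * (1/xs α (n+1)) + epsE (xs α n) * (xs α (n+1) * (xs α (n+1))⁻¹) := by
        rw [one_div]; ring
    _ = (aE (xs α n) : ℝ) * (1/xs α (n+1)) + epsE (xs α n) := by
        rw [mul_inv_cancel₀ hx', mul_one]

lemma lin_zero (γ : ℝ) (hirr : Irrational γ) (m k : ℤ) (h : (m:ℝ)*γ + k = 0) :
    m = 0 ∧ k = 0 := by
  by_cases hm : m = 0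
  · refine ⟨hm, ?_⟩
    rw [hm] at h
    push_cast at h
    have : (k:ℝ) = 0 := by linarith
    exact_mod_cast this
  · exfalso
    apply hirr
    refine ⟨(-k : ℚ)/(m : ℚ), ?_⟩
    have hm' : (m:ℝ) ≠ 0 := Int.cast_ne_zero.mpr hm
    push_cast
    field_simp
    linarith [h]

lemma trip_succ (α : ℝ) (A B C : ℤ) (n : ℕ) :
    trip α A B C (n+1) =
      ((trip α A B C n).1 * (aE (xs α n))^2 + (trip α A B C n).2.1 * (aE (xs α n)) + (trip α A B C n).2.2,
       esZ α n * (2 * (aE (xs α n)) * (trip α A B C n).1 + (trip α A B C n).2.1),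
       (trip α A B C n).1) := rfl

lemma bbs_succ (α β : ℝ) (n : ℕ) :
    bbs α β (n+1) = epsE (xs α n) / (bbs α β n - (aE (xs α n) : ℝ)) := rfl

lemma master (α β : ℝ) (A B C : ℤ) (hα : 1 < α) (hirr : Irrational α)
    (hA : A ≠ 0)
    (hroot : (A:ℝ)*α^2 + (B:ℝ)*α + (C:ℝ) = 0)
    (hβirr : Irrational β) (hβne : β ≠ α)
    (hβroot : (A:ℝ)*β^2 + (B:ℝ)*β + (C:ℝ) = 0) :
    ∀ n, Irrational (bbs α β n) ∧ bbs α β n ≠ 1/xs α n ∧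
      ((trip α A B C n).1 : ℝ)*(1/xs α n)^2 + ((trip α A B C n).2.1:ℝ)*(1/xs α n) + ((trip α A B C n).2.2:ℝ) = 0 ∧
      ((trip α A B C n).1 : ℝ)*(bbs α β n)^2 + ((trip α A B C n).2.1:ℝ)*(bbs α β n) + ((trip α A B C n).2.2:ℝ) = 0 ∧
      (trip α A B C n).1 ≠ 0 ∧
      (trip α A B C n).2.1^2 - 4*(trip α A B C n).1*(trip α A B C n).2.2 = B^2 - 4*A*C := by
  -- discriminant is nonzero
  have hDne : B^2 - 4*A*C ≠ 0 := by
    intro hD0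
    have hcD : ((B:ℝ)^2 - 4*(A:ℝ)*(C:ℝ)) = 0 := by exact_mod_cast congrArg (fun z : ℤ => (z:ℝ)) hD0
    have hsq : ((((2*A:ℤ)):ℝ)*α + (B:ℝ))^2 = 0 := by
      push_cast
      linear_combination (4*(A:ℝ)) * hroot + hcD
    have hval : (((2*A:ℤ)):ℝ)*α + (B:ℝ) = 0 :=
      (pow_eq_zero_iff (two_ne_zero)).mp hsq
    obtain ⟨hm, _⟩ := lin_zero α hirr (2*A) B hval
    omega
  intro n
  induction n with
  | zero =>
    have hx0 : xs α 0 = 1/α := rfl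
    have hal0 : 1/xs α 0 = α := by rw [hx0, one_div_one_div]
    refine ⟨hβirr, by rw [hal0]; exact hβne, ?_, ?_, hA, rfl⟩
    · show (A:ℝ)*(1/xs α 0)^2 + (B:ℝ)*(1/xs α 0) + (C:ℝ) = 0
      rw [hal0]; exact hroot
    · exact hβroot
  | succ n ih =>
    obtain ⟨h1, h2, h3, h4, h5, h6⟩ := ih
    have hgood := xs_good α hα hirr n
    have hgood' := xs_good α hα hirr (n+1)
    have hal'irr : Irrational (1/xs α (n+1)) := inv_irrational' _ hgood'.2.2
    have hbrel := bbs_rel α β n h1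
    have halrel := al_rel α hα hirr n
    have hesq := epsE_sq (xs α n)
    have hb'irr := bbs_irr α β n h1
    have hb'ne0 : bbs α β (n+1) ≠ 0 := hb'irr.ne_zero
    have hal'ne0 : 1/xs α (n+1) ≠ 0 := hal'irr.ne_zero
    -- the two new root equations
    have H3 := quad_step ((trip α A B C n).1 : ℝ) ((trip α A B C n).2.1:ℝ) ((trip α A B C n).2.2:ℝ)
      (aE (xs α n) : ℝ) (epsE (xs α n)) (1/xs α n) (1/xs α (n+1)) h3 halrel hesq
    have H4 := quad_step ((trip α A B C n).1 : ℝ) ((trip α A B C n).2.1:ℝ) ((trip α A B C n).2.2:ℝ)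
      (aE (xs α n) : ℝ) (epsE (xs α n)) (bbs α β n) (bbs α β (n+1)) h4 hbrel hesq
    have hcast1 : (((trip α A B C (n+1)).1 : ℤ) : ℝ) =
        ((trip α A B C n).1:ℝ)*(aE (xs α n):ℝ)^2 + ((trip α A B C n).2.1:ℝ)*(aE (xs α n):ℝ) + ((trip α A B C n).2.2:ℝ) := by
      rw [trip_succ]; push_cast; ring
    have hcast2 : (((trip α A B C (n+1)).2.1 : ℤ) : ℝ) =
        epsE (xs α n) * (2*(aE (xs α n):ℝ)*((trip α A B C n).1:ℝ) + ((trip α A B C n).2.1:ℝ)) := by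
      rw [trip_succ]
      push_cast
      rw [esZ_cast]
    have hcast3 : (((trip α A B C (n+1)).2.2 : ℤ) : ℝ) = ((trip α A B C n).1:ℝ) := by
      rw [trip_succ]
    have H6 : (trip α A B C (n+1)).2.1^2 - 4*(trip α A B C (n+1)).1*(trip α A B C (n+1)).2.2 = B^2 - 4*A*C := by
      rw [trip_succ]
      have := esZ_sq α n
      linear_combination (2*(aE (xs α n))*(trip α A B C n).1 + (trip α A B C n).2.1)^2 * this + h6
    have H3' : ((trip α A B C (n+1)).1 : ℝ)*(1/xs α (n+1))^2 + ((trip α A B C (n+1)).2.1:ℝ)*(1/xs α (n+1)) + ((trip α A B C (n+1)).2.2:ℝ) = 0 := by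
      rw [hcast1, hcast2, hcast3]
      linear_combination H3
    have H4' : ((trip α A B C (n+1)).1 : ℝ)*(bbs α β (n+1))^2 + ((trip α A B C (n+1)).2.1:ℝ)*(bbs α β (n+1)) + ((trip α A B C (n+1)).2.2:ℝ) = 0 := by
      rw [hcast1, hcast2, hcast3]
      linear_combination H4
    have H2 : bbs α β (n+1) ≠ 1/xs α (n+1) := by
      intro heq
      apply h2
      have := hbrel
      rw [heq] at this
      have h' : (bbs α β n - 1/xs α n) * (1/xs α (n+1)) = 0 := by
        linear_combination this - halrel
      rcases mul_eq_zero.mp h' with h'' | h''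
      · linarith [sub_eq_zero.mp h'']
      · exact absurd h'' hal'ne0
    have H5 : (trip α A B C (n+1)).1 ≠ 0 := by
      intro hP0
      have hcast0 : (((trip α A B C (n+1)).1 : ℤ):ℝ) = 0 := by rw [hP0]; norm_num
      rw [hcast0] at H3'
      have hlin : ((trip α A B C (n+1)).2.1 : ℝ)*(1/xs α (n+1)) + ((trip α A B C (n+1)).2.2 : ℝ) = 0 := by
        linear_combination H3'
      obtain ⟨hQ0, hR0⟩ := lin_zero _ hal'irr _ _ hlin
      rw [hP0, hQ0] at H6
      simp at H6
      exact hDne H6.symm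
    exact ⟨hb'irr, H2, H3', H4', H5, H6⟩

section Derived
variable (α β : ℝ) (A B C : ℤ)

lemma sum_eq (hα : 1 < α) (hirr : Irrational α) (hA : A ≠ 0)
    (hroot : (A:ℝ)*α^2 + (B:ℝ)*α + (C:ℝ) = 0)
    (hβirr : Irrational β) (hβne : β ≠ α)
    (hβroot : (A:ℝ)*β^2 + (B:ℝ)*β + (C:ℝ) = 0) (n : ℕ) :
    ((trip α A B C n).1:ℝ) * (1/xs α n + bbs α β n) + ((trip α A B C n).2.1:ℝ) = 0 := by
  obtain ⟨h1, h2, h3, h4, h5, h6⟩ := master α β A B C hα hirr hA hroot hβirr hβne hβroot n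
  have hfac : (1/xs α n - bbs α β n) *
      (((trip α A B C n).1:ℝ)*(1/xs α n + bbs α β n) + ((trip α A B C n).2.1:ℝ)) = 0 := by
    linear_combination h3 - h4
  rcases mul_eq_zero.mp hfac with h | h
  · exact absurd (sub_eq_zero.mp h).symm h2
  · exact h

lemma diff_sq (hα : 1 < α) (hirr : Irrational α) (hA : A ≠ 0)
    (hroot : (A:ℝ)*α^2 + (B:ℝ)*α + (C:ℝ) = 0)
    (hβirr : Irrational β) (hβne : β ≠ α)
    (hβroot : (A:ℝ)*β^2 + (B:ℝ)*β + (C:ℝ) = 0) (n : ℕ) :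
    ((trip α A B C n).1:ℝ)^2*(1/xs α n - bbs α β n)^2 = ((B^2 - 4*A*C : ℤ):ℝ) := by
  obtain ⟨h1, h2, h3, h4, h5, h6⟩ := master α β A B C hα hirr hA hroot hβirr hβne hβroot n
  have hsum := sum_eq α β A B C hα hirr hA hroot hβirr hβne hβroot n
  have hprod : ((trip α A B C n).1:ℝ)*(1/xs α n)*(bbs α β n) = ((trip α A B C n).2.2:ℝ) := by
    linear_combination (-1 : ℝ)*h3 + (1/xs α n)*hsum
  have hc : ((trip α A B C n).2.1:ℝ)^2 - 4*((trip α A B C n).1:ℝ)*((trip α A B C n).2.2:ℝ)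
      = ((B^2 - 4*A*C : ℤ):ℝ) := by
    push_cast
    have h6' := congrArg (fun z : ℤ => (z:ℝ)) h6
    push_cast at h6'
    linear_combination h6'
  linear_combination (((trip α A B C n).1:ℝ)*(1/xs α n + bbs α β n) - ((trip α A B C n).2.1:ℝ))*hsum
    + (-4*((trip α A B C n).1:ℝ))*hprod + hc

lemma bbs_transfer (hα : 1 < α) (hirr : Irrational α) (hA : A ≠ 0)
    (hroot : (A:ℝ)*α^2 + (B:ℝ)*α + (C:ℝ) = 0)
    (hβirr : Irrational β) (hβne : β ≠ α)
    (hβroot : (A:ℝ)*β^2 + (B:ℝ)*β + (C:ℝ) = 0)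
    (r : ℕ) (hfix : xs α r = xs α 0) : bbs α β r = β := by
  obtain ⟨h1, h2, h3, h4, h5, h6⟩ := master α β A B C hα hirr hA hroot hβirr hβne hβroot r
  have hsum := sum_eq α β A B C hα hirr hA hroot hβirr hβne hβroot r
  have hal : 1/xs α r = α := by
    rw [hfix]
    show 1/xs α 0 = α
    rw [show xs α 0 = 1/α from rfl, one_div_one_div]
  rw [hal] at h3 hsum
  set P := (trip α A B C r).1 with hP
  set Q := (trip α A B C r).2.1 with hQ
  set R := (trip α A B C r).2.2 with hR
  -- eliminate α² between h3 and hroot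
  have helim : ((A*Q - P*B : ℤ):ℝ)*α + ((A*R - P*C : ℤ):ℝ) = 0 := by
    push_cast
    linear_combination (A:ℝ)*h3 - (P:ℝ)*hroot
  obtain ⟨e1, e2⟩ := lin_zero α hirr _ _ helim
  have he1 : ((A:ℝ)*(Q:ℝ) : ℝ) = (P:ℝ)*(B:ℝ) := by exact_mod_cast congrArg (fun z:ℤ => (z:ℝ)) (by omega : A*Q = P*B)
  have he2 : ((A:ℝ)*(R:ℝ) : ℝ) = (P:ℝ)*(C:ℝ) := by exact_mod_cast congrArg (fun z:ℤ => (z:ℝ)) (by omega : A*R = P*C)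
  have hAne : (A:ℝ) ≠ 0 := Int.cast_ne_zero.mpr hA
  have hPne : (P:ℝ) ≠ 0 := Int.cast_ne_zero.mpr h5
  -- β is a root of the r-th triple
  have hβr : (P:ℝ)*β^2 + (Q:ℝ)*β + (R:ℝ) = 0 := by
    have hmul : (A:ℝ) * ((P:ℝ)*β^2 + (Q:ℝ)*β + (R:ℝ)) = 0 := by
      linear_combination (P:ℝ)*hβroot + β*he1 + he2
    rcases mul_eq_zero.mp hmul with h | h
    · exact absurd h hAne
    · exact h
  -- both β and bbs r satisfy : P*(x + α) + Q = 0
  have hfac : (β - α) * ((P:ℝ)*(β + α) + (Q:ℝ)) = 0 := by linear_combination hβr - h3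
  have hβsum : (P:ℝ)*(β + α) + (Q:ℝ) = 0 := by
    rcases mul_eq_zero.mp hfac with h | h
    · exact absurd (sub_eq_zero.mp h) hβne
    · exact h
  have : (P:ℝ) * (bbs α β r - β) = 0 := by linear_combination hsum - hβsum
  rcases mul_eq_zero.mp this with h | h
  · exact absurd h hPne
  · linarith [sub_eq_zero.mp h]

lemma xs_per (r : ℕ) (hfix : xs α r = xs α 0) : ∀ n, xs α (n + r) = xs α n := by
  intro n
  show TE^[n + r] (1/α) = TE^[n] (1/α)
  rw [Function.iterate_add_apply]
  exact congrArg (TE^[n]) hfix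

lemma bbs_per (hα : 1 < α) (hirr : Irrational α) (hA : A ≠ 0)
    (hroot : (A:ℝ)*α^2 + (B:ℝ)*α + (C:ℝ) = 0)
    (hβirr : Irrational β) (hβne : β ≠ α)
    (hβroot : (A:ℝ)*β^2 + (B:ℝ)*β + (C:ℝ) = 0)
    (r : ℕ) (hfix : xs α r = xs α 0) : ∀ n, bbs α β (n + r) = bbs α β n := by
  intro n
  induction n with
  | zero => rw [Nat.zero_add]; exact bbs_transfer α β A B C hα hirr hA hroot hβirr hβne hβroot r hfix
  | succ n ih =>
    have h1 : n + 1 + r = (n + r) + 1 := by omega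
    rw [h1, bbs_succ, bbs_succ, xs_per α r hfix n, ih]

lemma barTE_iter : ∀ n, barTE^[n] (1/α, -β) = (xs α n, -(bbs α β n)) := by
  intro n
  induction n with
  | zero => rfl
  | succ n ih =>
    rw [Function.iterate_succ_apply', ih]
    unfold barTE
    refine Prod.ext ?_ ?_
    · exact (xs_succ α n).symm
    · show epsE (xs α n) / ((aE (xs α n):ℝ) + -(bbs α β n)) = -(bbs α β (n+1))
      rw [bbs_succ]
      rw [show (aE (xs α n):ℝ) + -(bbs α β n) = -(bbs α β n - (aE (xs α n):ℝ)) by ring, div_neg]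

end Derived

lemma esZ_cases (α : ℝ) (n : ℕ) : esZ α n = 1 ∨ esZ α n = -1 := by
  unfold esZ; split; exacts [Or.inl rfl, Or.inr rfl]

/-- continuant matrices (p, pp, q, qq) -/
noncomputable def ct (α : ℝ) : ℕ → ℤ × ℤ × ℤ × ℤ
  | 0 => (1, 0, 0, 1)
  | n+1 =>
    let c := ct α n
    (aE (xs α n) * c.1 + c.2.1, esZ α n * c.1,
     aE (xs α n) * c.2.2.1 + c.2.2.2, esZ α n * c.2.2.1)

lemma ct_succ (α : ℝ) (n : ℕ) :
    ct α (n+1) = (aE (xs α n) * (ct α n).1 + (ct α n).2.1, esZ α n * (ct α n).1,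
      aE (xs α n) * (ct α n).2.2.1 + (ct α n).2.2.2, esZ α n * (ct α n).2.2.1) := rfl

lemma ct_key (α : ℝ) (hα : 1 < α) (hirr : Irrational α) :
    ∀ n, α * (((ct α n).2.2.1:ℝ) * (1/xs α n) + ((ct α n).2.2.2:ℝ))
      = ((ct α n).1:ℝ) * (1/xs α n) + ((ct α n).2.1:ℝ) := by
  intro n
  induction n with
  | zero =>
    have h0 : ct α 0 = (1,0,0,1) := rfl
    rw [h0]
    push_cast
    rw [show xs α 0 = 1/α from rfl, one_div_one_div]
    ring
  | succ n ih =>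
    have halrel := al_rel α hα hirr n
    rw [← esZ_cast α n] at halrel
    rw [ct_succ]
    push_cast
    linear_combination (1/xs α (n+1)) * ih + (((ct α n).1:ℝ) - α*((ct α n).2.2.1:ℝ)) * halrel

lemma ct_q (α : ℝ) (hα : 1 < α) (hirr : Irrational α) :
    ∀ n, |(ct α (n+1)).2.2.2| + 1 ≤ (ct α (n+1)).2.2.1 := by
  intro n
  induction n with
  | zero =>
    show |esZ α 0 * (0:ℤ)| + 1 ≤ aE (xs α 0) * 0 + 1
    simp
  | succ n ih =>
    show |esZ α (n+1) * (ct α (n+1)).2.2.1| + 1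
      ≤ aE (xs α (n+1)) * (ct α (n+1)).2.2.1 + (ct α (n+1)).2.2.2
    set q := (ct α (n+1)).2.2.1 with hq
    set qq := (ct α (n+1)).2.2.2 with hqq
    have ha : 2 ≤ aE (xs α (n+1)) := as_ge_two α hα hirr (n+1)
    have hq1 : 1 ≤ q := by linarith [abs_nonneg qq, ih]
    have h2q : 2*q ≤ aE (xs α (n+1))*q := mul_le_mul_of_nonneg_right ha (by linarith)
    have hqqb : |qq| ≤ q - 1 := by linarith [ih]
    obtain ⟨hl, hr⟩ := abs_le.mp hqqb
    have habs : |esZ α (n+1) * q| = q := by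
      rcases esZ_cases α (n+1) with h' | h' <;> rw [h']
      · rw [one_mul, abs_of_nonneg (by linarith)]
      · rw [neg_one_mul, abs_neg, abs_of_nonneg (by linarith)]
    rw [habs]
    linarith

lemma bbs_interval_step (α β : ℝ) (hα : 1 < α) (hirr : Irrational α) (n : ℕ)
    (h : -1 < bbs α β n ∧ bbs α β n < 1) :
    -1 < bbs α β (n+1) ∧ bbs α β (n+1) < 1 := by
  have ha2 : 2 ≤ aE (xs α n) := as_ge_two α hα hirr n
  have ha2' : (2:ℝ) ≤ (aE (xs α n):ℝ) := by exact_mod_cast ha2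
  have hlt : bbs α β n - (aE (xs α n):ℝ) < -1 := by linarith
  have habs : |bbs α β n - (aE (xs α n):ℝ)| > 1 := by
    rw [abs_of_neg (by linarith : bbs α β n - (aE (xs α n):ℝ) < 0)]
    linarith
  have habs' : |bbs α β (n+1)| < 1 := by
    rw [bbs_succ, abs_div]
    have he : |epsE (xs α n)| = 1 := by
      rcases epsE_cases (xs α n) with h' | h' <;> rw [h'] <;> norm_num
    rw [he]
    rw [div_lt_one (by linarith : (0:ℝ) < |bbs α β n - (aE (xs α n):ℝ)|)]
    exact habs
  exact abs_lt.mp habs'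

lemma beta_facts (α : ℝ) (hirr : Irrational α) (A B C : ℤ) (hA : A ≠ 0)
    (hroot : (A:ℝ)*α^2 + (B:ℝ)*α + (C:ℝ) = 0) :
    Irrational (-(B:ℝ)/(A:ℝ) - α) ∧ (-(B:ℝ)/(A:ℝ) - α) ≠ α ∧
      (A:ℝ)*(-(B:ℝ)/(A:ℝ) - α)^2 + (B:ℝ)*(-(B:ℝ)/(A:ℝ) - α) + (C:ℝ) = 0 := by
  have hAne : (A:ℝ) ≠ 0 := Int.cast_ne_zero.mpr hA
  have hcast : ((( -B : ℚ)/(A:ℚ) : ℚ) : ℝ) = -(B:ℝ)/(A:ℝ) := by push_cast; ring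
  have hirrβ : Irrational (-(B:ℝ)/(A:ℝ) - α) := by
    rw [← hcast]
    exact hirr.ratCast_sub _
  have hβne : (-(B:ℝ)/(A:ℝ) - α) ≠ α := by
    intro h
    apply hirr
    refine ⟨(-B : ℚ)/(2*A : ℚ), ?_⟩
    have h2A : ((2*A:ℚ):ℝ) ≠ 0 := by push_cast; simpa using hAne
    push_cast
    have : -(B:ℝ)/(A:ℝ) = 2*α := by linarith
    rw [div_eq_iff (by simpa using hAne)] at this
    field_simp
    linarith
  have hABsum : (A:ℝ)*((-(B:ℝ)/(A:ℝ) - α) + α) + (B:ℝ) = 0 := by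
    field_simp
    ring
  exact ⟨hirrβ, hβne, by linear_combination hroot + ((-(B:ℝ)/(A:ℝ) - α) - α)*hABsum⟩

lemma part_moreover (α : ℝ) (hα : 1 < α) (hirr : Irrational α)
    (r : ℕ) (hfix : TE^[r] (1 / α) = 1 / α)
    (A B C : ℤ) (hA : A ≠ 0)
    (hroot : (A : ℝ) * α ^ 2 + (B : ℝ) * α + (C : ℝ) = 0) :
    barTE^[r] (1 / α, -(-(B : ℝ) / (A : ℝ) - α)) =
      (1 / α, -(-(B : ℝ) / (A : ℝ) - α)) := by
  obtain ⟨hβirr, hβne, hβroot⟩ := beta_facts α hirr A B C hA hroot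
  set β := -(B:ℝ)/(A:ℝ) - α with hβ
  have hfix' : xs α r = xs α 0 := hfix
  have ht := bbs_transfer α β A B C hα hirr hA hroot hβirr hβne hβroot r hfix'
  have hit := barTE_iter α β r
  rw [hit, hfix', ht]
  rfl

lemma part_forward (α : ℝ) (hα : 1 < α) (hirr : Irrational α)
    (r : ℕ) (hr : 1 ≤ r) (hfix : TE^[r] (1 / α) = 1 / α) :
    ∃ A B C : ℤ, A ≠ 0 ∧ (A : ℝ) * α ^ 2 + (B : ℝ) * α + (C : ℝ) = 0 ∧
      -1 < -(B : ℝ) / (A : ℝ) - α ∧ -(B : ℝ) / (A : ℝ) - α < 1 := by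
  have hfix' : xs α r = xs α 0 := hfix
  have hal0 : 1/xs α 0 = α := by rw [show xs α 0 = 1/α from rfl, one_div_one_div]
  -- quadratic coefficients from continuants
  set A := (ct α r).2.2.1 with hAdef
  set B := (ct α r).2.2.2 - (ct α r).1 with hBdef
  set C := -(ct α r).2.1 with hCdef
  have hA : A ≠ 0 := by
    obtain ⟨m, rfl⟩ : ∃ m, r = m + 1 := ⟨r - 1, by omega⟩
    have := ct_q α hα hirr m
    have h0 : 0 ≤ |(ct α (m+1)).2.2.2| := abs_nonneg _
    omega
  have hkey := ct_key α hα hirr r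
  rw [hfix', hal0] at hkey
  have hroot : (A:ℝ)*α^2 + (B:ℝ)*α + (C:ℝ) = 0 := by
    rw [hAdef, hBdef, hCdef]
    push_cast
    linear_combination hkey
  refine ⟨A, B, C, hA, hroot, ?_⟩
  obtain ⟨hβirr, hβne, hβroot⟩ := beta_facts α hirr A B C hA hroot
  set β := -(B:ℝ)/(A:ℝ) - α with hβ
  -- dichotomy
  by_cases hcase : ∃ N, -1 < bbs α β N ∧ bbs α β N < 1
  · obtain ⟨N, hN⟩ := hcase
    have hinv : ∀ k, -1 < bbs α β (N+k) ∧ bbs α β (N+k) < 1 := by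
      intro k
      induction k with
      | zero => exact hN
      | succ k ih => exact bbs_interval_step α β hα hirr (N+k) ih
    have hper := bbs_per α β A B C hα hirr hA hroot hβirr hβne hβroot r hfix'
    have hmul : ∀ k, bbs α β (k*r) = β := by
      intro k
      induction k with
      | zero => rw [Nat.zero_mul]; rfl
      | succ k ih =>
        have h' : (k+1)*r = k*r + r := by ring
        rw [h', hper (k*r), ih]
    obtain ⟨m, rfl⟩ : ∃ m, r = m + 1 := ⟨r - 1, by omega⟩
    have hNr : N*(m+1) = N + N*m := by ring
    have := hmul N
    rw [hNr] at this
    rw [← this]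
    exact hinv (N*m)
  · exfalso
    push_neg at hcase
    have hout : ∀ n, bbs α β n ≤ -1 ∨ 1 ≤ bbs α β n := by
      intro n
      rcases le_or_gt (bbs α β n) (-1) with h | h
      · exact Or.inl h
      · exact Or.inr (hcase n h)
    have hmaster := master α β A B C hα hirr hA hroot hβirr hβne hβroot
    -- every bbs is ≥ 1 in absolute value ≥ 1; in fact never ≤ -1
    have habs1 : ∀ n, 1 ≤ |bbs α β n| := by
      intro n
      rcases hout n with h | h
      · rw [abs_of_nonpos (by linarith)]; linarith
      · rw [abs_of_nonneg (by linarith)]; linarith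
    -- |bbs n - aE| ≤ 1
    have hble : ∀ n, |bbs α β n - (aE (xs α n):ℝ)| ≤ 1 := by
      intro n
      have hrel := bbs_rel α β n (hmaster n).1
      have hprod : bbs α β (n+1) * (bbs α β n - (aE (xs α n):ℝ)) = epsE (xs α n) := by
        linear_combination hrel
      have habs : |bbs α β (n+1)| * |bbs α β n - (aE (xs α n):ℝ)| = 1 := by
        rw [← abs_mul, hprod]
        rcases epsE_cases (xs α n) with h | h <;> rw [h] <;> norm_num
      nlinarith [habs1 (n+1), abs_nonneg (bbs α β n - (aE (xs α n):ℝ))]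
    -- strict growth of |al - bb|
    have hgrow : ∀ n, |1/xs α n - bbs α β n| < |1/xs α (n+1) - bbs α β (n+1)| := by
      intro n
      have hrel := bbs_rel α β n (hmaster n).1
      have halrel := al_rel α hα hirr n
      have hbio : |bbs α β n - (aE (xs α n):ℝ)| ≤ 1 := hble n
      have hgood' := xs_good α hα hirr (n+1)
      have hx'pos : 0 < xs α (n+1) := hgood'.1
      have hx'lt : xs α (n+1) < 1 := hgood'.2.1
      -- al - a = e * x'
      have hala : 1/xs α n - (aE (xs α n):ℝ) = epsE (xs α n) * xs α (n+1) := by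
        have := xs_rel α hα hirr n
        linarith
      have hid : (1/xs α (n+1) - bbs α β (n+1)) * ((1/xs α n - (aE (xs α n):ℝ)) * (bbs α β n - (aE (xs α n):ℝ)))
          = epsE (xs α n) * (bbs α β n - 1/xs α n) := by
        linear_combination (bbs α β n - (aE (xs α n):ℝ)) * halrel - (1/xs α n - (aE (xs α n):ℝ)) * hrel
      have habsid : |1/xs α (n+1) - bbs α β (n+1)| * (xs α (n+1) * |bbs α β n - (aE (xs α n):ℝ)|)
          = |1/xs α n - bbs α β n| := by
        have h1 : |epsE (xs α n)| = 1 := by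
          rcases epsE_cases (xs α n) with h | h <;> rw [h] <;> norm_num
        have := congrArg abs hid
        rw [abs_mul, abs_mul, abs_mul, h1, one_mul, hala, abs_mul, h1, one_mul,
          abs_of_pos hx'pos, abs_sub_comm (bbs α β n) (1/xs α n)] at this
        linarith [this]
      have hdpos : 0 < |1/xs α n - bbs α β n| := by
        rw [abs_pos, sub_ne_zero]
        exact fun h => (hmaster n).2.1 h.symm
      have hbapos : 0 < |bbs α β n - (aE (xs α n):ℝ)| := by
        rw [abs_pos, sub_ne_zero]
        exact ((hmaster n).1).ne_int _
      have hw : xs α (n+1) * |bbs α β n - (aE (xs α n):ℝ)| < 1 := by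
        nlinarith [hbio, hx'pos, hx'lt, hbapos]
      have hvpos : 0 < |1/xs α (n+1) - bbs α β (n+1)| := by
        rcases (abs_nonneg (1/xs α (n+1) - bbs α β (n+1))).lt_or_eq with h | h
        · exact h
        · exfalso
          rw [← h, zero_mul] at habsid
          linarith
      calc |1/xs α n - bbs α β n|
          = |1/xs α (n+1) - bbs α β (n+1)| * (xs α (n+1) * |bbs α β n - (aE (xs α n):ℝ)|) := habsid.symm
        _ < |1/xs α (n+1) - bbs α β (n+1)| * 1 := by
            exact mul_lt_mul_of_pos_left hw hvpos
        _ = |1/xs α (n+1) - bbs α β (n+1)| := mul_one _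
    have hmono : StrictMono (fun n => |1/xs α n - bbs α β n|) :=
      strictMono_nat_of_lt_succ hgrow
    have hlt : |1/xs α 0 - bbs α β 0| < |1/xs α r - bbs α β r| := hmono (by omega : 0 < r)
    have htr := bbs_transfer α β A B C hα hirr hA hroot hβirr hβne hβroot r hfix'
    rw [hfix', htr] at hlt
    exact lt_irrefl _ hlt

lemma back_step (α β : ℝ) (hα : 1 < α) (hirr : Irrational α) (i j : ℕ)
    (hIi : Irrational (bbs α β i)) (hIj : Irrational (bbs α β j))
    (hbi1 : -1 < bbs α β i) (hbi2 : bbs α β i < 1)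
    (hbj1 : -1 < bbs α β j) (hbj2 : bbs α β j < 1)
    (hx : xs α (i+1) = xs α (j+1)) (hb : bbs α β (i+1) = bbs α β (j+1)) :
    xs α i = xs α j ∧ bbs α β i = bbs α β j := by
  have hreli := bbs_rel α β i hIi
  have hrelj := bbs_rel α β j hIj
  rw [hb] at hreli
  set b' := bbs α β (j+1) with hb'
  have hb'ne : b' ≠ 0 := (bbs_irr α β j hIj).ne_zero
  have hai : (2:ℝ) ≤ (aE (xs α i):ℝ) := by exact_mod_cast as_ge_two α hα hirr i
  have haj : (2:ℝ) ≤ (aE (xs α j):ℝ) := by exact_mod_cast as_ge_two α hα hirr j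
  have hproi : b' * (bbs α β i - (aE (xs α i):ℝ)) = epsE (xs α i) := by linear_combination hreli
  have hproj : b' * (bbs α β j - (aE (xs α j):ℝ)) = epsE (xs α j) := by linear_combination hrelj
  have hdi : bbs α β i - (aE (xs α i):ℝ) < -1 := by linarith
  have hdj : bbs α β j - (aE (xs α j):ℝ) < -1 := by linarith
  have heps : epsE (xs α i) = epsE (xs α j) := by
    rcases epsE_cases (xs α i) with hi' | hi' <;> rcases epsE_cases (xs α j) with hj' | hj' <;>
      rw [hi'] at hproi <;> rw [hj'] at hproj
    · rw [hi', hj']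
    · exfalso
      rcases lt_trichotomy b' 0 with h | h | h
      · nlinarith
      · exact hb'ne h
      · nlinarith
    · exfalso
      rcases lt_trichotomy b' 0 with h | h | h
      · nlinarith
      · exact hb'ne h
      · nlinarith
    · rw [hi', hj']
  rw [heps] at hproi
  have hdiff : bbs α β i - (aE (xs α i):ℝ) = bbs α β j - (aE (xs α j):ℝ) :=
    mul_left_cancel₀ hb'ne (by rw [hproi, hproj])
  have haeq : aE (xs α i) = aE (xs α j) := by
    have hcast : ((aE (xs α i) - aE (xs α j) : ℤ):ℝ) = bbs α β i - bbs α β j := by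
      push_cast
      linarith
    have hlt2 : |((aE (xs α i) - aE (xs α j) : ℤ):ℝ)| < 2 := by
      rw [hcast, abs_lt]
      constructor <;> linarith
    have hile : |aE (xs α i) - aE (xs α j)| ≤ 1 := by
      rw [← Int.cast_abs] at hlt2
      have h2 : |aE (xs α i) - aE (xs α j)| < (2:ℤ) := by exact_mod_cast hlt2
      omega
    obtain ⟨hl, hr⟩ := abs_le.mp hile
    obtain ⟨k1, hk1⟩ := aE_even (xs α i)
    obtain ⟨k2, hk2⟩ := aE_even (xs α j)
    omega
  have hbeq : bbs α β i = bbs α β j := by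
    have : ((aE (xs α i)):ℝ) = ((aE (xs α j)):ℝ) := by exact_mod_cast haeq
    linarith
  refine ⟨?_, hbeq⟩
  have hri := xs_rel α hα hirr i
  have hrj := xs_rel α hα hirr j
  rw [hx, heps, haeq] at hri
  have hinveq : 1 / xs α i = 1 / xs α j := by rw [hri, hrj]
  have := congrArg (fun t => 1/t) hinveq
  simpa [one_div_one_div] using this

set_option maxHeartbeats 2000000 in
lemma part_backward (α : ℝ) (hα : 1 < α) (hirr : Irrational α)
    (A B C : ℤ) (hA : A ≠ 0)
    (hroot : (A : ℝ) * α ^ 2 + (B : ℝ) * α + (C : ℝ) = 0)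
    (hb1 : -1 < -(B : ℝ) / (A : ℝ) - α) (hb2 : -(B : ℝ) / (A : ℝ) - α < 1) :
    ∃ r : ℕ, 1 ≤ r ∧ TE^[r] (1 / α) = 1 / α := by
  obtain ⟨hβirr, hβne, hβroot⟩ := beta_facts α hirr A B C hA hroot
  set β := -(B:ℝ)/(A:ℝ) - α with hβ
  have hAne : (A:ℝ) ≠ 0 := Int.cast_ne_zero.mpr hA
  have hmaster := master α β A B C hα hirr hA hroot hβirr hβne hβroot
  have hsum := sum_eq α β A B C hα hirr hA hroot hβirr hβne hβroot
  have hdsq := diff_sq α β A B C hα hirr hA hroot hβirr hβne hβroot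
  have hal0 : 1/xs α 0 = α := by rw [show xs α 0 = 1/α from rfl, one_div_one_div]
  have hbint : ∀ n, -1 < bbs α β n ∧ bbs α β n < 1 := by
    intro n
    induction n with
    | zero => exact ⟨hb1, hb2⟩
    | succ n ih => exact bbs_interval_step α β hα hirr n ih
  have halgt : ∀ n, 1 < 1/xs α n := fun n =>
    one_lt_inv_of _ (xs_good α hα hirr n).1 (xs_good α hα hirr n).2.1
  set D := B^2 - 4*A*C with hDdef
  have hD1 : 1 ≤ D := by
    have h0 := hdsq 0
    have e1 : (trip α A B C 0).1 = A := rfl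
    have e3 : bbs α β 0 = β := rfl
    rw [e1, e3, hal0] at h0
    have hαβ : α - β ≠ 0 := sub_ne_zero.mpr (fun h => hβne h.symm)
    have h1 : (0:ℝ) < (A:ℝ)^2 := lt_of_le_of_ne (sq_nonneg _) (Ne.symm (pow_ne_zero 2 hAne))
    have h2 : (0:ℝ) < (α - β)^2 := lt_of_le_of_ne (sq_nonneg _) (Ne.symm (pow_ne_zero 2 hαβ))
    have hpos : (0:ℝ) < ((D:ℤ):ℝ) := by rw [← h0]; nlinarith
    have : (0:ℤ) < D := by exact_mod_cast hpos
    omega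
  have hDR : (1:ℝ) ≤ ((D:ℤ):ℝ) := by exact_mod_cast hD1
  have hPabs : ∀ n, 1 ≤ |(trip α A B C n).1| := fun n => Int.one_le_abs ((hmaster n).2.2.2.2.1)
  have hPsq : ∀ n, (1:ℝ) ≤ ((trip α A B C n).1:ℝ)^2 := by
    intro n
    have h1 : (1:ℝ) ≤ |((trip α A B C n).1:ℝ)| := by
      rw [← Int.cast_abs]
      exact_mod_cast hPabs n
    nlinarith [sq_abs ((trip α A B C n).1:ℝ)]
  have hbound : ∀ n, 1/xs α n < 1 + ((D:ℤ):ℝ) := by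
    intro n
    by_contra hcon
    push_neg at hcon
    have hsq := hdsq n
    have hb := (hbint n).2
    have h1 : ((D:ℤ):ℝ) < 1/xs α n - bbs α β n := by linarith
    nlinarith [hsq, hPsq n, sq_nonneg (1/xs α n - bbs α β n)]
  -- infinitely many n with 1/xs n ≥ 2
  have hSinf : {n : ℕ | 2 ≤ 1/xs α n}.Infinite := by
    by_contra hfin
    rw [Set.not_infinite] at hfin
    obtain ⟨N0, hN0⟩ := hfin.bddAbove
    set N := N0 + 1 with hNdef
    have hlt2 : ∀ n, N ≤ n → 1/xs α n < 2 := by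
      intro n hn
      by_contra h
      push_neg at h
      have := hN0 (show n ∈ {n : ℕ | 2 ≤ 1/xs α n} from h)
      omega
    have hcne : 1/xs α N - 1 ≠ 0 := ne_of_gt (by linarith [halgt N])
    have hc : 0 < (1/xs α N - 1)^2 := lt_of_le_of_ne (sq_nonneg _) (Ne.symm (pow_ne_zero 2 hcne))
    set c := (1/xs α N - 1)^2 with hcdef
    have hstep : ∀ n, N ≤ n → 1/xs α N ≤ 1/xs α n → 1/xs α n + c ≤ 1/xs α (n+1) := by
      intro n hn hgeN
      have h2 := hlt2 n hn
      have h1 := halgt n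
      have hfl : ⌊1/xs α n⌋ = 1 := by
        rw [Int.floor_eq_iff]
        push_cast
        constructor <;> linarith
      have haE : aE (xs α n) = 2 := by
        unfold aE
        rw [hfl]
        have hne1 : ¬ Even (1:ℤ) := by decide
        rw [if_neg hne1]
        norm_num
      have hTE : xs α (n+1) = 2 - 1/xs α n := by
        rw [xs_succ]
        unfold TE
        rw [haE]
        push_cast
        rw [abs_of_nonpos (by linarith)]
        ring
      rw [hTE]
      have h2al : 0 < 2 - 1/xs α n := by linarith
      rw [le_div_iff₀ h2al]
      have hmono2 : c ≤ (1/xs α n - 1)^2 := by nlinarith [halgt N]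
      nlinarith [mul_le_of_le_one_right (le_of_lt hc) (by linarith : 2 - 1/xs α n ≤ 1)]
    have hgrow2 : ∀ k : ℕ, 1/xs α N + k*c ≤ 1/xs α (N+k) := by
      intro k
      induction k with
      | zero => simp
      | succ k ih =>
        have hkc : (0:ℝ) ≤ k*c := by positivity
        have hgeN : 1/xs α N ≤ 1/xs α (N+k) := by linarith
        have := hstep (N+k) (by omega) hgeN
        push_cast
        have hNk : N + (k+1) = (N+k) + 1 := by omega
        rw [hNk]
        push_cast at ih
        linarith
    obtain ⟨k, hk⟩ := exists_nat_gt (2/c)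
    have hkc2 : 2 < k*c := by
      rw [div_lt_iff₀ hc] at hk
      linarith
    have h2' := hlt2 (N+k) (by omega)
    have := hgrow2 k
    have hN1 := halgt N
    linarith
  -- pigeonhole box
  set K2 := D*(2+D) with hK2
  set K3 := (D*(2+D))^2 + D with hK3
  have hmaps : Set.MapsTo (trip α A B C) {n : ℕ | 2 ≤ 1/xs α n}
      (Set.Icc (-D) D ×ˢ Set.Icc (-K2) K2 ×ˢ Set.Icc (-K3) K3) := by
    intro n hn
    have hn2 : 2 ≤ 1/xs α n := hn
    have hb1' := (hbint n).1
    have hb2' := (hbint n).2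
    -- |P| ≤ D
    have hPD : |(trip α A B C n).1| ≤ D := by
      have hsq := hdsq n
      have ht1 : (1:ℝ) ≤ 1/xs α n - bbs α β n := by linarith
      have ht2 : (1:ℝ) ≤ (1/xs α n - bbs α β n)^2 := by nlinarith
      have hreal : ((trip α A B C n).1:ℝ)^2 ≤ ((D:ℤ):ℝ) := by
        nlinarith [sq_nonneg (((trip α A B C n).1:ℝ)), ht2, hsq]
      have hint : (trip α A B C n).1^2 ≤ D := by exact_mod_cast hreal
      nlinarith [hPabs n, abs_nonneg (trip α A B C n).1, sq_abs (trip α A B C n).1]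
    -- |Q| ≤ K2
    have hQK : |(trip α A B C n).2.1| ≤ K2 := by
      have hs := hsum n
      have hPDr : |((trip α A B C n).1:ℝ)| ≤ ((D:ℤ):ℝ) := by
        rw [← Int.cast_abs]
        exact_mod_cast hPD
      have halb : |1/xs α n + bbs α β n| ≤ 2 + ((D:ℤ):ℝ) := by
        rw [abs_le]
        constructor <;> [linarith [halgt n]; linarith [hbound n]]
      have hQr : |((trip α A B C n).2.1:ℝ)| ≤ ((D:ℤ):ℝ) * (2 + ((D:ℤ):ℝ)) := by
        have hQeq : ((trip α A B C n).2.1:ℝ) = -(((trip α A B C n).1:ℝ) * (1/xs α n + bbs α β n)) := by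
          linarith [hs]
        rw [hQeq, abs_neg, abs_mul]
        exact mul_le_mul hPDr halb (abs_nonneg _) (by linarith)
      have : |(trip α A B C n).2.1| ≤ D * (2 + D) := by
        rw [← Int.cast_abs] at hQr
        exact_mod_cast hQr
      exact this
    -- |R| ≤ K3
    have hRK : |(trip α A B C n).2.2| ≤ K3 := by
      have h6 := (hmaster n).2.2.2.2.2
      have heq4 : 4*((trip α A B C n).1*(trip α A B C n).2.2) = (trip α A B C n).2.1^2 - D := by
        rw [hDdef]; linarith [h6]
      have htri : |(trip α A B C n).2.1^2 - D| ≤ (trip α A B C n).2.1^2 + D := by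
        rw [abs_le]
        constructor <;> nlinarith [sq_nonneg (trip α A B C n).2.1]
      have e1 : |4*((trip α A B C n).1*(trip α A B C n).2.2)| = 4*(|(trip α A B C n).1| * |(trip α A B C n).2.2|) := by
        rw [abs_mul, abs_mul]
        norm_num
      have e2 : |4*((trip α A B C n).1*(trip α A B C n).2.2)| = |(trip α A B C n).2.1^2 - D| := by
        rw [heq4]
      have e4 : |(trip α A B C n).2.2| ≤ 4*(|(trip α A B C n).1| * |(trip α A B C n).2.2|) := by
        nlinarith [hPabs n, abs_nonneg (trip α A B C n).2.2]
      have e5 : (trip α A B C n).2.1^2 ≤ K2^2 := by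
        nlinarith [hQK, abs_nonneg (trip α A B C n).2.1, sq_abs (trip α A B C n).2.1]
      have e6 : K3 = K2^2 + D := by rw [hK3, hK2]
      linarith [e1, e2, e4, e5, htri, e6]
    exact ⟨abs_le.mp hPD, abs_le.mp hQK, abs_le.mp hRK⟩
  have hfinbox : (Set.Icc (-D) D ×ˢ Set.Icc (-K2) K2 ×ˢ Set.Icc (-K3) K3).Finite :=
    (Set.finite_Icc _ _).prod ((Set.finite_Icc _ _).prod (Set.finite_Icc _ _))
  obtain ⟨m, hm, n, hn, hmn, heq⟩ := hSinf.exists_ne_map_eq_of_mapsTo hmaps hfinbox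
  obtain ⟨i, j, hij, hiS, hjS, hteq⟩ :
      ∃ i j, i < j ∧ 2 ≤ 1/xs α i ∧ 2 ≤ 1/xs α j ∧ trip α A B C i = trip α A B C j := by
    rcases hmn.lt_or_gt with h | h
    exacts [⟨m, n, h, hm, hn, heq⟩, ⟨n, m, h, hn, hm, heq.symm⟩]
  have hPne : ((trip α A B C i).1:ℝ) ≠ 0 := Int.cast_ne_zero.mpr ((hmaster i).2.2.2.2.1)
  have h3i := (hmaster i).2.2.1
  have h3j := (hmaster j).2.2.1
  have h4i := (hmaster i).2.2.2.1
  have h4j := (hmaster j).2.2.2.1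
  rw [← hteq] at h3j h4j
  have hsumi := hsum i
  have haleq : 1/xs α i = 1/xs α j := by
    have hfac : (1/xs α i - 1/xs α j) *
        (((trip α A B C i).1:ℝ)*(1/xs α i + 1/xs α j) + ((trip α A B C i).2.1:ℝ)) = 0 := by
      linear_combination h3i - h3j
    rcases mul_eq_zero.mp hfac with h | h
    · linarith [sub_eq_zero.mp h]
    · exfalso
      have : ((trip α A B C i).1:ℝ) * (1/xs α j - bbs α β i) = 0 := by
        linear_combination h - hsumi
      rcases mul_eq_zero.mp this with h' | h'
      · exact hPne h'
      · have := sub_eq_zero.mp h'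
        have hbi := (hbint i).2
        have := halgt j
        linarith [sub_eq_zero.mp h']
  have hbeq : bbs α β i = bbs α β j := by
    have hfac : (bbs α β i - bbs α β j) *
        (((trip α A B C i).1:ℝ)*(bbs α β i + bbs α β j) + ((trip α A B C i).2.1:ℝ)) = 0 := by
      linear_combination h4i - h4j
    rcases mul_eq_zero.mp hfac with h | h
    · linarith [sub_eq_zero.mp h]
    · exfalso
      have : ((trip α A B C i).1:ℝ) * (bbs α β j - 1/xs α i) = 0 := by
        linear_combination h - hsumi
      rcases mul_eq_zero.mp this with h' | h'
      · exact hPne h'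
      · have := sub_eq_zero.mp h'
        have hbj' := (hbint j).2
        have := halgt i
        linarith [sub_eq_zero.mp h']
  have hxeq : xs α i = xs α j := by
    have := congrArg (fun t => 1/t) haleq
    simpa [one_div_one_div] using this
  -- downward induction
  have hback : ∀ k, k ≤ i → xs α (i - k) = xs α (j - k) ∧ bbs α β (i - k) = bbs α β (j - k) := by
    intro k
    induction k with
    | zero => intro _; simpa using ⟨hxeq, hbeq⟩
    | succ k ih =>
      intro hk1
      obtain ⟨hx', hb'⟩ := ih (by omega)
      have hi1 : i - k = (i - (k+1)) + 1 := by omega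
      have hj1 : j - k = (j - (k+1)) + 1 := by omega
      rw [hi1, hj1] at hx' hb'
      exact back_step α β hα hirr (i - (k+1)) (j - (k+1))
        (hmaster _).1 (hmaster _).1
        (hbint _).1 (hbint _).2 (hbint _).1 (hbint _).2 hx' hb'
  obtain ⟨hx0, _⟩ := hback i le_rfl
  refine ⟨j - i, by omega, ?_⟩
  rw [Nat.sub_self] at hx0
  exact hx0.symm

/-- An irrational `α > 1` has purely periodic even continued fraction expansion
iff it is a quadratic irrational whose Galois conjugate `ᾱ = −B/A − α` lies in
`(−1, 1)`; moreover in that case `T̄_e^r(1/α, −ᾱ) = (1/α, −ᾱ)`, i.e. `−ᾱ` has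
the purely periodic extended even continued fraction expansion given by the
reversed period of `α`. -/
theorem purely_periodic_ECF_iff_quadratic_surd (α : ℝ)
    (hα : 1 < α) (hirr : Irrational α) :
    ((∃ r : ℕ, 1 ≤ r ∧ TE^[r] (1 / α) = 1 / α) ↔
      ∃ A B C : ℤ, A ≠ 0 ∧ (A : ℝ) * α ^ 2 + (B : ℝ) * α + (C : ℝ) = 0 ∧
        -1 < -(B : ℝ) / (A : ℝ) - α ∧ -(B : ℝ) / (A : ℝ) - α < 1) ∧
    (∀ r : ℕ, 1 ≤ r → TE^[r] (1 / α) = 1 / α →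
      ∀ A B C : ℤ, A ≠ 0 → (A : ℝ) * α ^ 2 + (B : ℝ) * α + (C : ℝ) = 0 →
        barTE^[r] (1 / α, -(-(B : ℝ) / (A : ℝ) - α)) =
          (1 / α, -(-(B : ℝ) / (A : ℝ) - α))) := by
  constructor
  · constructor
    · rintro ⟨r, hr, hfix⟩
      exact part_forward α hα hirr r hr hfix
    · rintro ⟨A, B, C, hA, hroot, hb1, hb2⟩
      exact part_backward α hα hirr A B C hA hroot hb1 hb2
  · intro r hr hfix A B C hA hroot
    exact part_moreover α hα hirr r hfix A B C hA hroot
end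

section
/- Let (a, c) be a pair of coprime integers. Then there exist integers b, d with ad − bc = 1 and (a b; c d) ∈ Θ if and only if at least one of a, c is even. Moreover, for a pair of coprime integers (m, n), there exists a matrix (a b; c d) ∈ Θ with a + b = m and c + d = n if and only if m and n are both odd. In other words, the Θ-orbit of ∞ consists exactly of the rationals a/c in lowest terms with a or c even, and the Θ-orbit of 1 consists exactly of the rationals m/n in lowest terms with m and n both odd. -/
/-- The mod-2 condition defining the Theta group `Θ`: the entries of the matrix
are congruent mod 2 to `(1 0; 0 1)` or `(0 1; 1 0)`. -/
def ThetaMod2 (a b c d : ℤ) : Prop :=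
  ((a : ZMod 2), (b : ZMod 2), (c : ZMod 2), (d : ZMod 2)) ∈
    ({(1, 0, 0, 1), (0, 1, 1, 0)} :
      Set (ZMod 2 × ZMod 2 × ZMod 2 × ZMod 2))

lemma theta_emod_iff (a b c d : ℤ) :
    ThetaMod2 a b c d ↔
    ((a % 2 = 1 ∧ b % 2 = 0 ∧ c % 2 = 0 ∧ d % 2 = 1) ∨
     (a % 2 = 0 ∧ b % 2 = 1 ∧ c % 2 = 1 ∧ d % 2 = 0)) := by
  have h0 : ((0 : ZMod 2)) = ((0 : ℤ) : ZMod 2) := by norm_num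
  have h1 : ((1 : ZMod 2)) = ((1 : ℤ) : ZMod 2) := by norm_num
  unfold ThetaMod2
  simp only [Set.mem_insert_iff, Set.mem_singleton_iff, Prod.mk.injEq, h0, h1,
    ZMod.intCast_eq_intCast_iff, Int.ModEq]
  omega

lemma mul_emod_odd (x y : ℤ) (hy : y % 2 = 1) : (x * y) % 2 = x % 2 := by
  rw [Int.mul_emod, hy]; omega

lemma mul_emod_even (x y : ℤ) (hy : y % 2 = 0) : (x * y) % 2 = 0 := by
  rw [Int.mul_emod, hy]; omega

/-- Lemma 13: for coprime `(a,c)`, there exist `b, d` with `ad − bc = 1` and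
`(a b; c d) ∈ Θ` iff `a` or `c` is even; and for coprime `(m,n)` there is a
matrix `(a b; c d) ∈ Θ` with `a + b = m`, `c + d = n` iff `m` and `n` are both
odd.  In other words, `Θ∞ = {a/c : a or c even}` and `Θ1 = {m/n : m, n odd}`. -/
theorem Theta_orbits_of_infty_and_one :
    (∀ a c : ℤ, IsCoprime a c →
      ((∃ b d : ℤ, a * d - b * c = 1 ∧ ThetaMod2 a b c d) ↔
        (Even a ∨ Even c))) ∧
    (∀ m n : ℤ, IsCoprime m n →
      ((∃ a b c d : ℤ, a * d - b * c = 1 ∧ ThetaMod2 a b c d ∧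
          a + b = m ∧ c + d = n) ↔ (Odd m ∧ Odd n))) := by
  constructor
  · intro a c hco
    constructor
    · rintro ⟨b, d, -, ht⟩
      rw [theta_emod_iff] at ht
      rw [Int.even_iff, Int.even_iff]
      omega
    · intro hev
      obtain ⟨u, v, huv⟩ := hco
      -- u * a + v * c = 1
      have hP : ∀ k : ℤ, a * (u + k * c) - (-v + k * a) * c = 1 := by
        intro k; linear_combination huv
      have hadd := Int.add_emod (u * a) (v * c) 2
      rw [huv] at hadd
      rcases hev with ha | hc
      · rw [Int.even_iff] at ha
        have hua0 : (u * a) % 2 = 0 := mul_emod_even u a ha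
        have hc1 : c % 2 = 1 := by
          rcases Int.emod_two_eq_zero_or_one c with hc | hc
          · have := mul_emod_even v c hc; omega
          · exact hc
        have hvc : (v * c) % 2 = v % 2 := mul_emod_odd v c hc1
        have huc : (u * c) % 2 = u % 2 := mul_emod_odd u c hc1
        refine ⟨-v + u * a, u + u * c, hP u, ?_⟩
        rw [theta_emod_iff]
        right
        refine ⟨ha, by omega, hc1, by omega⟩
      · rw [Int.even_iff] at hc
        have hvc0 : (v * c) % 2 = 0 := mul_emod_even v c hc
        have ha1 : a % 2 = 1 := by
          rcases Int.emod_two_eq_zero_or_one a with ha | ha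
          · have := mul_emod_even u a ha; omega
          · exact ha
        have hua : (u * a) % 2 = u % 2 := mul_emod_odd u a ha1
        have hva : (v * a) % 2 = v % 2 := mul_emod_odd v a ha1
        refine ⟨-v + v * a, u + v * c, hP v, ?_⟩
        rw [theta_emod_iff]
        left
        refine ⟨ha1, by omega, hc, by omega⟩
  · intro m n hco
    constructor
    · rintro ⟨a, b, c, d, -, ht, hm, hn⟩
      rw [theta_emod_iff] at ht
      rw [Int.odd_iff, Int.odd_iff]
      omega
    · rintro ⟨hm, hn⟩
      rw [Int.odd_iff] at hm hn
      obtain ⟨u, v, huv⟩ := hco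
      have hadd := Int.add_emod (u * m) (v * n) 2
      rw [huv] at hadd
      have hum : (u * m) % 2 = u % 2 := mul_emod_odd u m hm
      have hvn : (v * n) % 2 = v % 2 := mul_emod_odd v n hn
      refine ⟨m + v, -v, n - u, u, by linear_combination huv, ?_, by ring, by ring⟩
      rw [theta_emod_iff]
      omega
end
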